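/- arXiv:2402.04791 — 10 statements merged into one kernel-verified Lean document; each statement's English description precedes it below -/
import Mathlib

section
/- For every positive integer q there exists n₀ ∈ ℕ such that for all n ≥ n₀, the chromatic mutual-visibility number of the n-dimensional hypercube satisfies χ_μ(Q_n) > q; that is, χ_μ(Q_n) tends to infinity as n → ∞. -/
/-- The `n`-dimensional hypercube: vertices are subsets of `{1,…,n}` (modeled as
`Finset (Fin n)`), with `A` and `B` adjacent iff their symmetric difference has size 1. -/
def hypercube (n : ℕ) : SimpleGraph (Finset (Fin n)) where
  Adj A B := (symmDiff A B).card = 1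
  symm := ⟨fun A B h => by simpa only [symmDiff_comm] using h⟩
  loopless := ⟨fun A h => by simp [symmDiff_self] at h⟩

/-- `u` and `v` are `M`-visible in `G`: there is a shortest `u,v`-path containing
no vertex of `M` as an internal vertex. -/
def IsVisiblePair {V : Type*} (G : SimpleGraph V) (M : Set V) (u v : V) : Prop :=
  ∃ p : G.Walk u v, p.IsPath ∧ p.length = G.dist u v ∧
    ∀ x ∈ p.support, x ∈ M → x = u ∨ x = v

/-- `M` is a mutual-visibility set in `G`. -/
def IsMutualVisibilitySet {V : Type*} (G : SimpleGraph V) (M : Set V) : Prop :=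
  ∀ u ∈ M, ∀ v ∈ M, IsVisiblePair G M u v

/-- `M` is a total mutual-visibility set in `G`. -/
def IsTotalMutualVisibilitySet {V : Type*} (G : SimpleGraph V) (M : Set V) : Prop :=
  ∀ u v : V, IsVisiblePair G M u v

/-- The mutual-visibility number `μ(Q_n)`. -/
noncomputable def mu (n : ℕ) : ℕ :=
  sSup {k | ∃ M : Set (Finset (Fin n)), IsMutualVisibilitySet (hypercube n) M ∧ M.ncard = k}

/-- The total mutual-visibility number `μ_t(Q_n)`. -/
noncomputable def muTotal (n : ℕ) : ℕ :=
  sSup {k | ∃ M : Set (Finset (Fin n)), IsTotalMutualVisibilitySet (hypercube n) M ∧ M.ncard = k}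

/-- The chromatic mutual-visibility number `χ_μ(Q_n)`: the least number of colors in a
vertex-coloring of `Q_n` in which every color class is a mutual-visibility set. -/
noncomputable def chiMu (n : ℕ) : ℕ :=
  sInf {k | ∃ c : Finset (Fin n) → Fin k, ∀ i : Fin k,
    IsMutualVisibilitySet (hypercube n) {A | c A = i}}

/-- The total chromatic mutual-visibility number `χ_μ^total(Q_n)`. -/
noncomputable def chiMuTotal (n : ℕ) : ℕ :=
  sInf {k | ∃ c : Finset (Fin n) → Fin k, ∀ i : Fin k,
    IsTotalMutualVisibilitySet (hypercube n) {A | c A = i}}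

/-- A family `F` of `r`-element subsets of `[n]` contains an `(r,s,t)`-daisy if there are
`A ⊆ B` with `|A| = r - t` and `|B| = r + s - t` such that every `r`-set `T` with
`A ⊆ T ⊆ B` belongs to `F`. -/
def ContainsDaisy (n r s t : ℕ) (F : Finset (Finset (Fin n))) : Prop :=
  ∃ A B : Finset (Fin n), A ⊆ B ∧ A.card = r - t ∧ B.card = r + s - t ∧
    ∀ T : Finset (Fin n), A ⊆ T → T ⊆ B → T.card = r → T ∈ F

/-- The Turán number `ex(n, D_r(s,t))`: the largest size of a family of `r`-element
subsets of `[n]` containing no `(r,s,t)`-daisy. -/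
noncomputable def daisyTuran (n r s t : ℕ) : ℕ :=
  sSup {k | ∃ F : Finset (Finset (Fin n)), (∀ T ∈ F, T.card = r) ∧
    ¬ ContainsDaisy n r s t F ∧ F.card = k}


/-- Finite hypergraph Ramsey, uniform in the ground linear order. -/
lemma uniformRamsey : ∀ (t r s : ℕ), ∃ N : ℕ,
    ∀ (α : Type) [LinearOrder α] (S : Finset α) (c : Finset α → Fin (r + 1)),
      N ≤ S.card → ∃ Y : Finset α, Y ⊆ S ∧ s ≤ Y.card ∧
        ∃ κ : Fin (r + 1), ∀ T : Finset α, T ⊆ Y → T.card = t → c T = κ := by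
  intro t
  induction t with
  | zero =>
    intro r s
    refine ⟨s, fun α _ S c hS => ⟨S, Finset.Subset.refl S, hS, c ∅, fun T hT hT0 => ?_⟩⟩
    rw [Finset.card_eq_zero.mp hT0]
  | succ t IH =>
    intro r s
    -- auxiliary claim: end-homogeneous sets
    have claim : ∀ m : ℕ, ∃ N : ℕ,
        ∀ (α : Type) [LinearOrder α] (S : Finset α) (c : Finset α → Fin (r + 1)),
          N ≤ S.card → ∃ X : Finset α, X ⊆ S ∧ m ≤ X.card ∧
            ∃ f : α → Fin (r + 1), ∀ x ∈ X, ∀ T : Finset α, T ⊆ X →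
              (∀ y ∈ T, x < y) → T.card = t → c (insert x T) = f x := by
      intro m
      induction m with
      | zero =>
        exact ⟨0, fun α _ S c _ => ⟨∅, Finset.empty_subset S, le_refl 0, fun _ => 0,
          fun x hx => absurd hx (Finset.notMem_empty x)⟩⟩
      | succ m IHm =>
        obtain ⟨Nm, hNm⟩ := IHm
        obtain ⟨N', hN'⟩ := IH r Nm
        refine ⟨N' + 1, ?_⟩
        intro α _ S c hS
        have hSne : S.Nonempty := Finset.card_pos.mp (by omega)
        set x₀ := S.min' hSne with hx₀
        have hx₀S : x₀ ∈ S := S.min'_mem hSne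
        set S' := S.erase x₀ with hS'
        have hS'card : N' ≤ S'.card := by
          rw [hS', Finset.card_erase_of_mem hx₀S]; omega
        obtain ⟨Y', hY'S, hY'card, κ₀, hκ₀⟩ := hN' α S' (fun T => c (insert x₀ T)) hS'card
        obtain ⟨X', hX'Y, hX'card, f', hf'⟩ := hNm α Y' c hY'card
        have hx₀X' : x₀ ∉ X' := fun h => (Finset.notMem_erase x₀ S) (hS' ▸ hY'S (hX'Y h))
        refine ⟨insert x₀ X', ?_, ?_, Function.update f' x₀ κ₀, ?_⟩
        · intro y hy
          rcases Finset.mem_insert.mp hy with rfl | hy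
          · exact hx₀S
          · exact (Finset.erase_subset x₀ S) (hY'S (hX'Y hy))
        · rw [Finset.card_insert_of_notMem hx₀X']; omega
        · intro x hx T hT hlt hcard
          have hTX' : ∀ (h : x₀ ≤ x), T ⊆ X' := by
            intro h y hy
            rcases Finset.mem_insert.mp (hT hy) with hy' | hy'
            · exact absurd (hlt y hy) (not_lt.mpr (hy' ▸ h))
            · exact hy'
          rcases Finset.mem_insert.mp hx with rfl | hx'
          · have hT' : T ⊆ X' := hTX' le_rfl
            rw [Function.update_self]
            exact hκ₀ T (fun y hy => hX'Y (hT' hy)) hcard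
          · have hxx₀ : x ≠ x₀ := by
              rintro rfl
              exact hx₀X' hx'
            have hx₀x : x₀ ≤ x := S.min'_le x ((Finset.erase_subset x₀ S) (hY'S (hX'Y hx')))
            rw [Function.update_of_ne hxx₀]
            exact hf' x hx' T (hTX' hx₀x) hlt hcard
    obtain ⟨Nc, hNc⟩ := claim ((r + 1) * s + 1)
    refine ⟨Nc, ?_⟩
    intro α _ S c hS
    obtain ⟨X, hXS, hXcard, f, hf⟩ := hNc α S c hS
    have hpigeon : (Finset.univ : Finset (Fin (r + 1))).card * s < X.card := by
      rw [Finset.card_univ, Fintype.card_fin]; omega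
    obtain ⟨κ, -, hκ⟩ := Finset.exists_lt_card_fiber_of_mul_lt_card_of_maps_to
      (fun a (_ : a ∈ X) => Finset.mem_univ (f a)) hpigeon
    refine ⟨X.filter (fun x => f x = κ), (Finset.filter_subset _ _).trans hXS, by omega, κ, ?_⟩
    intro T hTY hTcard
    have hTne : T.Nonempty := Finset.card_pos.mp (by omega)
    set x := T.min' hTne with hxdef
    have hxT : x ∈ T := T.min'_mem hTne
    have hxY : x ∈ X.filter (fun x => f x = κ) := hTY hxT
    have hxX : x ∈ X := (Finset.mem_filter.mp hxY).1
    have hfx : f x = κ := (Finset.mem_filter.mp hxY).2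
    have hTX : T ⊆ X := hTY.trans (Finset.filter_subset _ _)
    have h1 : c T = c (insert x (T.erase x)) := by rw [Finset.insert_erase hxT]
    rw [h1, hf x hxX (T.erase x) ((Finset.erase_subset x T).trans hTX)
      (fun y hy => lt_of_le_of_ne (T.min'_le y (Finset.mem_of_mem_erase hy))
        (Ne.symm (Finset.ne_of_mem_erase hy)))
      (by rw [Finset.card_erase_of_mem hxT, hTcard]; rfl), hfx]

/-- Layered Ramsey: one monochromatic color per cardinality `j ≤ J`. -/
lemma layeredRamsey : ∀ (J r s : ℕ), ∃ N : ℕ,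
    ∀ (α : Type) [LinearOrder α] (S : Finset α) (c : Finset α → Fin (r + 1)),
      N ≤ S.card → ∃ Y : Finset α, Y ⊆ S ∧ s ≤ Y.card ∧
        ∃ κ : ℕ → Fin (r + 1), ∀ j ≤ J, ∀ T : Finset α, T ⊆ Y → T.card = j → c T = κ j := by
  intro J
  induction J with
  | zero =>
    intro r s
    obtain ⟨N, hN⟩ := uniformRamsey 0 r s
    refine ⟨N, ?_⟩
    intro α _ S c hS
    obtain ⟨Y, h1, h2, κ₀, h3⟩ := hN α S c hS
    exact ⟨Y, h1, h2, fun _ => κ₀, fun j hj T hT hc => h3 T hT (by omega)⟩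
  | succ J IHJ =>
    intro r s
    obtain ⟨NJ, hNJ⟩ := IHJ r s
    obtain ⟨Nu, hNu⟩ := uniformRamsey (J + 1) r NJ
    refine ⟨Nu, ?_⟩
    intro α _ S c hS
    obtain ⟨Y₁, hY₁S, hY₁card, κ₁, hκ₁⟩ := hNu α S c hS
    obtain ⟨Y, hYY₁, hYcard, κ', hκ'⟩ := hNJ α Y₁ c hY₁card
    refine ⟨Y, hYY₁.trans hY₁S, hYcard, fun j => if j = J + 1 then κ₁ else κ' j, ?_⟩
    intro j hj T hT hc
    by_cases hjJ : j = J + 1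
    · simpa [hjJ] using hκ₁ T (hT.trans hYY₁) (by omega)
    · simpa [hjJ] using hκ' j (by omega) T hT hc


-- triangle subset for symmDiff
lemma symmDiff_card_triangle {n : ℕ} (A B C : Finset (Fin n)) :
    (symmDiff A C).card ≤ (symmDiff A B).card + (symmDiff B C).card := by
  have h1 : symmDiff A C ⊆ symmDiff A B ∪ symmDiff B C := by
    intro y hy
    simp only [Finset.mem_symmDiff, Finset.mem_union] at *
    tauto
  calc (symmDiff A C).card ≤ (symmDiff A B ∪ symmDiff B C).card := Finset.card_le_card h1
    _ ≤ (symmDiff A B).card + (symmDiff B C).card := Finset.card_union_le _ _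

lemma walk_len_lower {n : ℕ} : ∀ {A B : Finset (Fin n)} (w : (hypercube n).Walk A B),
    (symmDiff A B).card ≤ w.length := by
  intro A B w
  induction w with
  | nil => simp [symmDiff_self]
  | cons h w' IH =>
    rename_i u v' w₂
    rw [SimpleGraph.Walk.length_cons]
    have := symmDiff_card_triangle u v' w₂
    have hadj : (symmDiff u v').card = 1 := h
    omega

lemma exists_walk_card {n : ℕ} : ∀ (k : ℕ) (A B : Finset (Fin n)),
    (symmDiff A B).card = k → ∃ w : (hypercube n).Walk A B, w.length = k := by
  intro k
  induction k with
  | zero =>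
    intro A B h
    have : A = B := symmDiff_eq_bot.mp (Finset.card_eq_zero.mp h)
    subst this
    exact ⟨SimpleGraph.Walk.nil, rfl⟩
  | succ k IH =>
    intro A B h
    have hne : (symmDiff A B).Nonempty := Finset.card_pos.mp (by omega)
    obtain ⟨x, hx⟩ := hne
    by_cases hA : x ∈ A
    · have hB : x ∉ B := by
        rcases Finset.mem_symmDiff.mp hx with ⟨_, h2⟩ | ⟨_, h2⟩
        · exact h2
        · exact absurd hA h2
      have h1 : symmDiff A (A.erase x) = {x} := by
        ext y
        by_cases hyx : y = x <;>
          simp [Finset.mem_symmDiff, Finset.mem_erase, hyx, hA] <;> tauto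
      have h2 : symmDiff (A.erase x) B = (symmDiff A B).erase x := by
        ext y
        by_cases hyx : y = x <;>
          simp [Finset.mem_symmDiff, Finset.mem_erase, hyx, hA, hB] <;> tauto
      have hadj : (hypercube n).Adj A (A.erase x) := by
        show (symmDiff A (A.erase x)).card = 1
        rw [h1]; exact Finset.card_singleton x
      obtain ⟨w', hw'⟩ := IH (A.erase x) B (by rw [h2, Finset.card_erase_of_mem hx, h]; omega)
      exact ⟨SimpleGraph.Walk.cons hadj w', by simp [hw']⟩
    · have hB : x ∈ B := by
        rcases Finset.mem_symmDiff.mp hx with ⟨h2, _⟩ | ⟨h2, _⟩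
        · exact absurd h2 hA
        · exact h2
      have h1 : symmDiff A (insert x A) = {x} := by
        ext y
        by_cases hyx : y = x <;>
          simp [Finset.mem_symmDiff, Finset.mem_insert, hyx, hA] <;> tauto
      have h2 : symmDiff (insert x A) B = (symmDiff A B).erase x := by
        ext y
        by_cases hyx : y = x <;>
          simp [Finset.mem_symmDiff, Finset.mem_insert, Finset.mem_erase, hyx, hA, hB] <;> tauto
      have hadj : (hypercube n).Adj A (insert x A) := by
        show (symmDiff A (insert x A)).card = 1
        rw [h1]; exact Finset.card_singleton x
      obtain ⟨w', hw'⟩ := IH (insert x A) B (by rw [h2, Finset.card_erase_of_mem hx, h]; omega)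
      exact ⟨SimpleGraph.Walk.cons hadj w', by simp [hw']⟩

-- prefix and suffix walks for getVert
lemma prefix_walk {V : Type*} {G : SimpleGraph V} :
    ∀ {u v : V} (p : G.Walk u v) (j : ℕ), ∃ w : G.Walk u (p.getVert j), w.length ≤ j := by
  intro u v p
  induction p with
  | nil => intro j; exact ⟨SimpleGraph.Walk.nil, by simp⟩
  | cons h p' IH =>
    intro j
    cases j with
    | zero => exact ⟨SimpleGraph.Walk.nil, le_of_eq rfl⟩
    | succ j =>
      obtain ⟨w, hw⟩ := IH j
      exact ⟨SimpleGraph.Walk.cons h w, by simpa using Nat.succ_le_succ hw⟩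

lemma suffix_walk {V : Type*} {G : SimpleGraph V} :
    ∀ {u v : V} (p : G.Walk u v) (j : ℕ), ∃ w : G.Walk (p.getVert j) v, w.length ≤ p.length - j := by
  intro u v p
  induction p with
  | nil => intro j; exact ⟨SimpleGraph.Walk.nil, by simp⟩
  | cons h p' IH =>
    intro j
    cases j with
    | zero => exact ⟨SimpleGraph.Walk.cons h p', le_of_eq rfl⟩
    | succ j =>
      obtain ⟨w, hw⟩ := IH j
      refine ⟨w, ?_⟩
      rw [SimpleGraph.Walk.length_cons]
      exact le_trans hw (le_of_eq (by omega))

lemma card_le_of_adj {n : ℕ} {A B : Finset (Fin n)} (h : (hypercube n).Adj A B) :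
    B.card ≤ A.card + 1 := by
  have hsub : B ⊆ A ∪ symmDiff A B := by
    intro y hy
    by_cases hA : y ∈ A
    · exact Finset.mem_union_left _ hA
    · exact Finset.mem_union_right _ (Finset.mem_symmDiff.mpr (Or.inr ⟨hy, hA⟩))
  have hadj : (symmDiff A B).card = 1 := h
  calc B.card ≤ (A ∪ symmDiff A B).card := Finset.card_le_card hsub
    _ ≤ A.card + (symmDiff A B).card := Finset.card_union_le _ _
    _ = A.card + 1 := by rw [hadj]

lemma geodesic_between {n : ℕ} {u v : Finset (Fin n)} (huv : u ⊆ v)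
    (p : (hypercube n).Walk u v) (hlen : p.length = (symmDiff u v).card)
    (j : ℕ) (hj : j ≤ p.length) :
    u ⊆ p.getVert j ∧ p.getVert j ⊆ v := by
  set X := p.getVert j with hX
  obtain ⟨w1, hw1⟩ := prefix_walk p j
  obtain ⟨w2, hw2⟩ := suffix_walk p j
  have c1 : (symmDiff u X).card ≤ j := (walk_len_lower w1).trans hw1
  have c2 : (symmDiff X v).card ≤ p.length - j := (walk_len_lower w2).trans hw2
  have c3 : (symmDiff u v).card ≤ (symmDiff u X).card + (symmDiff X v).card :=
    symmDiff_card_triangle u X v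
  have hsum : (symmDiff u X).card + (symmDiff X v).card = (symmDiff u v).card := by omega
  have hst : symmDiff (symmDiff u X) (symmDiff X v) = symmDiff u v := by
    rw [symmDiff_assoc, symmDiff_symmDiff_cancel_left]
  have hsub : symmDiff (symmDiff u X) (symmDiff X v) ⊆ symmDiff u X ∪ symmDiff X v := by
    intro y hy
    simp only [Finset.mem_symmDiff, Finset.mem_union] at *
    tauto
  have hinter : (symmDiff u X ∩ symmDiff X v).card = 0 := by
    have h1 : (symmDiff u X ∪ symmDiff X v).card + (symmDiff u X ∩ symmDiff X v).card
        = (symmDiff u X).card + (symmDiff X v).card := Finset.card_union_add_card_inter _ _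
    have h2 : (symmDiff u v).card ≤ (symmDiff u X ∪ symmDiff X v).card :=
      hst ▸ Finset.card_le_card hsub
    have h3 : (symmDiff u X ∪ symmDiff X v).card ≤ (symmDiff u X).card + (symmDiff X v).card :=
      Finset.card_union_le _ _
    omega
  have hdisj : symmDiff u X ∩ symmDiff X v = ∅ := Finset.card_eq_zero.mp hinter
  constructor
  · intro y hyu
    by_contra hyX
    have h1 : y ∈ symmDiff u X := Finset.mem_symmDiff.mpr (Or.inl ⟨hyu, hyX⟩)
    have h2 : y ∈ symmDiff X v := Finset.mem_symmDiff.mpr (Or.inr ⟨huv hyu, hyX⟩)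
    exact absurd (Finset.mem_inter.mpr ⟨h1, h2⟩) (by simp [hdisj])
  · intro y hyX
    by_contra hyv
    have hyu : y ∉ u := fun h => hyv (huv h)
    have h1 : y ∈ symmDiff u X := Finset.mem_symmDiff.mpr (Or.inr ⟨hyX, hyu⟩)
    have h2 : y ∈ symmDiff X v := Finset.mem_symmDiff.mpr (Or.inl ⟨hyX, hyv⟩)
    exact absurd (Finset.mem_inter.mpr ⟨h1, h2⟩) (by simp [hdisj])

lemma no_coloring {n r : ℕ} (c : Finset (Fin n) → Fin (r + 1))
    (hY : ∃ Y : Finset (Fin n), 2 * (r + 1) ≤ Y.card ∧ ∃ κ : ℕ → Fin (r + 1),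
      ∀ j ≤ 2 * (r + 1), ∀ T : Finset (Fin n), T ⊆ Y → T.card = j → c T = κ j)
    (hc : ∀ i, IsMutualVisibilitySet (hypercube n) {A | c A = i}) : False := by
  obtain ⟨Y, hYcard, κ, hκ⟩ := hY
  -- pigeonhole: three values of j ≤ 2(r+1) with the same κ j
  have hcard : (Finset.univ : Finset (Fin (r + 1))).card * 2
      < (Finset.range (2 * (r + 1) + 1)).card := by
    simp only [Finset.card_univ, Fintype.card_fin, Finset.card_range]
    omega
  obtain ⟨i, -, hfib⟩ := Finset.exists_lt_card_fiber_of_mul_lt_card_of_maps_to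
    (fun j (_ : j ∈ Finset.range (2 * (r + 1) + 1)) => Finset.mem_univ (κ j)) hcard
  set F := (Finset.range (2 * (r + 1) + 1)).filter (fun j => κ j = i) with hF
  have hF3 : 3 ≤ F.card := hfib
  have hFne : F.Nonempty := Finset.card_pos.mp (by omega)
  set a := F.min' hFne with ha
  set b := F.max' hFne with hb
  have haF : a ∈ F := F.min'_mem hFne
  have hbF : b ∈ F := F.max'_mem hFne
  have hmid : ((F.erase a).erase b).Nonempty := by
    apply Finset.card_pos.mp
    have e1 : F.card - 1 ≤ (F.erase a).card := Finset.pred_card_le_card_erase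
    have e2 : (F.erase a).card - 1 ≤ ((F.erase a).erase b).card := Finset.pred_card_le_card_erase
    omega
  obtain ⟨m, hm⟩ := hmid
  have hmb : m ≠ b := (Finset.mem_erase.mp hm).1
  have hma : m ≠ a := (Finset.mem_erase.mp (Finset.mem_of_mem_erase hm)).1
  have hmF : m ∈ F := Finset.mem_of_mem_erase (Finset.mem_of_mem_erase hm)
  have ham : a < m := lt_of_le_of_ne (F.min'_le m hmF) (Ne.symm hma)
  have hmb' : m < b := lt_of_le_of_ne (F.le_max' m hmF) hmb
  have hbQ : b ≤ 2 * (r + 1) := by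
    have := (Finset.mem_filter.mp hbF).1
    simpa [Nat.lt_succ_iff] using Finset.mem_range.mp this
  have hκa : κ a = i := (Finset.mem_filter.mp haF).2
  have hκb : κ b = i := (Finset.mem_filter.mp hbF).2
  have hκm : κ m = i := (Finset.mem_filter.mp hmF).2
  -- choose u ⊆ v ⊆ Y
  obtain ⟨v, hvY, hvcard⟩ := Finset.exists_subset_card_eq (show b ≤ Y.card by omega)
  obtain ⟨u, huv, hucard⟩ := Finset.exists_subset_card_eq (show a ≤ v.card by omega)
  have hcu : c u = i := (hκ a (by omega) u (huv.trans hvY) hucard).trans hκa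
  have hcv : c v = i := (hκ b hbQ v hvY hvcard).trans hκb
  obtain ⟨p, hpath, hlen, hfree⟩ := hc i u hcu v hcv
  have hsd : symmDiff u v = v \ u := symmDiff_of_le huv
  have hsdcard : (symmDiff u v).card = b - a := by
    rw [hsd, Finset.card_sdiff_of_subset huv, hucard, hvcard]
  have hdistle : (hypercube n).dist u v ≤ b - a := by
    obtain ⟨w, hw⟩ := exists_walk_card (b - a) u v hsdcard
    exact hw ▸ SimpleGraph.dist_le w
  have hlow : (symmDiff u v).card ≤ p.length := walk_len_lower p
  have hL : p.length = b - a := by omega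
  -- intermediate value: find vertex of cardinality m on p
  have hf0 : (p.getVert 0).card = a := by rw [SimpleGraph.Walk.getVert_zero, hucard]
  have hfL : (p.getVert p.length).card = b := by rw [SimpleGraph.Walk.getVert_length, hvcard]
  have hstep : ∀ j, j < p.length → (p.getVert (j + 1)).card ≤ (p.getVert j).card + 1 :=
    fun j hj => card_le_of_adj (p.adj_getVert_succ hj)
  have hex : ∃ j, m ≤ (p.getVert j).card := ⟨p.length, by omega⟩
  set j₀ := Nat.find hex with hj₀def
  have hj₀spec : m ≤ (p.getVert j₀).card := Nat.find_spec hex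
  have hj₀L : j₀ ≤ p.length := Nat.find_min' hex (by omega)
  have hj₀0 : j₀ ≠ 0 := by
    intro h
    rw [h, hf0] at hj₀spec
    omega
  have hprev : ¬ m ≤ (p.getVert (j₀ - 1)).card := Nat.find_min hex (by omega)
  have hstep' := hstep (j₀ - 1) (by omega)
  rw [show j₀ - 1 + 1 = j₀ by omega] at hstep'
  have hXcard : (p.getVert j₀).card = m := by omega
  have hbet := geodesic_between huv p (by omega) j₀ hj₀L
  have hcX : c (p.getVert j₀) = i := (hκ m (by omega) _ (hbet.2.trans hvY) hXcard).trans hκm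
  have hXsup : p.getVert j₀ ∈ p.support :=
    SimpleGraph.Walk.mem_support_iff_exists_getVert.mpr ⟨j₀, rfl, hj₀L⟩
  rcases hfree _ hXsup hcX with h | h
  · rw [h, hucard] at hXcard; omega
  · rw [h, hvcard] at hXcard; omega

lemma subsingleton_mv {V : Type*} (G : SimpleGraph V) (M : Set V)
    (h : ∀ a ∈ M, ∀ b ∈ M, a = b) : IsMutualVisibilitySet G M := by
  intro u hu v hv
  obtain rfl : u = v := h u hu v hv
  refine ⟨SimpleGraph.Walk.nil, SimpleGraph.Walk.IsPath.nil, by simp [SimpleGraph.dist_self], ?_⟩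
  intro x hx _
  left
  simpa using hx

/-- The chromatic mutual-visibility number of hypercubes tends to infinity:
for every positive integer `q` there is `n₀` such that `χ_μ(Q_n) > q` for all `n ≥ n₀`. -/
theorem chiMu_hypercube_unbounded (q : ℕ) (hq : 1 ≤ q) :
    ∃ n₀ : ℕ, ∀ n : ℕ, n₀ ≤ n → q < chiMu n := by
  obtain ⟨r, rfl⟩ : ∃ r, q = r + 1 := ⟨q - 1, by omega⟩
  obtain ⟨N, hN⟩ := layeredRamsey (2 * (r + 1)) r (2 * (r + 1))
  refine ⟨N, fun n hn => ?_⟩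
  have hne : Set.Nonempty {k | ∃ c : Finset (Fin n) → Fin k, ∀ i : Fin k,
      IsMutualVisibilitySet (hypercube n) {A | c A = i}} := by
    have hcardeq : Fintype.card (Finset (Fin n)) = 2 ^ n := by
      rw [Fintype.card_finset, Fintype.card_fin]
    refine ⟨2 ^ n, Fintype.equivFinOfCardEq hcardeq, fun i => subsingleton_mv _ _ ?_⟩
    intro A hA B hB
    have := hA.trans hB.symm
    exact (Fintype.equivFinOfCardEq hcardeq).injective this
  have hgt : ∀ k ∈ {k | ∃ c : Finset (Fin n) → Fin k, ∀ i : Fin k,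
      IsMutualVisibilitySet (hypercube n) {A | c A = i}}, r + 1 < k := by
    rintro k ⟨c, hc⟩
    by_contra hk
    push_neg at hk
    rcases Nat.eq_zero_or_pos k with rfl | hkpos
    · exact (c ∅).elim0
    set c' : Finset (Fin n) → Fin (r + 1) := fun A => Fin.castLE (by omega) (c A) with hc'def
    have hc' : ∀ i, IsMutualVisibilitySet (hypercube n) {A | c' A = i} := by
      intro i
      by_cases hi : i.val < k
      · have heq : {A | c' A = i} = {A | c A = ⟨i.val, hi⟩} := by
          ext A
          simp only [Set.mem_setOf_eq, hc'def, Fin.ext_iff, Fin.coe_castLE]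
        rw [heq]
        exact hc _
      · have heq : {A | c' A = i} = ∅ := by
          ext A
          simp only [Set.mem_setOf_eq, Set.mem_empty_iff_false, iff_false, hc'def,
            Fin.ext_iff, Fin.coe_castLE]
          have := (c A).isLt
          omega
        rw [heq]
        intro x hx
        exact absurd hx (Set.notMem_empty x)
    obtain ⟨Y, -, hYcard, κ, hκ⟩ := hN (Fin n) Finset.univ c'
      (by simpa using hn)
    exact no_coloring c' ⟨Y, hYcard, κ, hκ⟩ hc'
  have := Nat.sInf_mem hne
  exact hgt _ this
end

section
/- For every natural number n ≥ 1, the total mutual-visibility number of the n-dimensional hypercube satisfies μ_t(Q_n) ≤ 2^n / n. -/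
open scoped symmDiff

variable {n : ℕ}

-- helper symmDiff identities in boolean algebra
lemma sd_tri (a b c : Finset (Fin n)) : (a ∆ b) ∆ (b ∆ c) = a ∆ c := by
  ext x; simp only [Finset.mem_symmDiff]; tauto

lemma sd_rearrange (a b c d : Finset (Fin n)) : (a ∆ c) ∆ (b ∆ d) = (a ∆ b) ∆ (c ∆ d) := by
  ext x; simp only [Finset.mem_symmDiff]; tauto

lemma sd_pair {i j : Fin n} (hij : i ≠ j) : ({i} ∆ {j} : Finset (Fin n)) = {i, j} := by
  ext x
  simp only [Finset.mem_symmDiff, Finset.mem_singleton, Finset.mem_insert]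
  constructor
  · tauto
  · rintro (rfl | rfl)
    · exact Or.inl ⟨rfl, hij⟩
    · exact Or.inr ⟨rfl, fun h => hij h.symm⟩

lemma no_dist_two {M : Set (Finset (Fin n))}
    (h : IsTotalMutualVisibilitySet (hypercube n) M) :
    ∀ A ∈ M, ∀ B ∈ M, (A ∆ B).card ≠ 2 := by
  intro A hA B hB hcard
  obtain ⟨i, j, hij, hD⟩ := Finset.card_eq_two.mp hcard
  set u : Finset (Fin n) := A ∆ {i} with hu
  set v : Finset (Fin n) := A ∆ {j} with hv
  have huv : u ∆ v = {i} ∆ {j} := by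
    rw [hu, hv, sd_rearrange, symmDiff_self, bot_symmDiff]
  have huv2 : (u ∆ v).card = 2 := by
    rw [huv, sd_pair hij, Finset.card_insert_of_notMem (by simpa using hij),
      Finset.card_singleton]
  -- u adjacent to A, A adjacent to v
  have huA : (hypercube n).Adj u A := by
    show (u ∆ A).card = 1
    rw [hu, symmDiff_comm A, symmDiff_symmDiff_cancel_right]
    exact Finset.card_singleton i
  have hAv : (hypercube n).Adj A v := by
    show (A ∆ v).card = 1
    rw [hv, symmDiff_symmDiff_cancel_left]
    exact Finset.card_singleton j
  obtain ⟨p, hp, hlen, hint⟩ := h u v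
  have hdle : (hypercube n).dist u v ≤ 2 := by
    have := SimpleGraph.dist_le (SimpleGraph.Walk.cons huA (SimpleGraph.Walk.cons hAv SimpleGraph.Walk.nil))
    simpa using this
  have hne : u ≠ v := by
    intro h'; rw [h', symmDiff_self] at huv2; simp at huv2
  have hlen0 : p.length ≠ 0 := fun h' => hne (SimpleGraph.Walk.eq_of_length_eq_zero h')
  have hlen1 : p.length ≠ 1 := by
    intro h'
    have : (u ∆ v).card = 1 := SimpleGraph.Walk.adj_of_length_eq_one h'
    omega
  have hlen2 : p.length = 2 := by omega
  clear_value u v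
  -- destructure the walk
  cases p with
  | nil => simp at hlen2
  | cons h1 q =>
    rename_i w
    cases q with
    | nil => simp at hlen2
    | cons h2 q' =>
      rename_i w'
      cases q' with
      | cons h3 q'' => simp [SimpleGraph.Walk.length_cons] at hlen2
      | nil =>
        -- walk u ~ w ~ v
        have huw : (u ∆ w).card = 1 := h1
        have hwv : (w ∆ v).card = 1 := h2
        obtain ⟨a, ha⟩ := Finset.card_eq_one.mp huw
        obtain ⟨b, hb⟩ := Finset.card_eq_one.mp hwv
        have hab : ({a} ∆ {b} : Finset (Fin n)) = {i} ∆ {j} := by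
          rw [← ha, ← hb, sd_tri, huv]
        have hab' : a ≠ b := by
          intro h'
          rw [h', symmDiff_self, sd_pair hij] at hab
          have : i ∈ (⊥ : Finset (Fin n)) := hab ▸ Finset.mem_insert_self i {j}
          simp at this
        have hmem : a ∈ ({i, j} : Finset (Fin n)) := by
          rw [← sd_pair hij, ← hab, sd_pair hab']
          exact Finset.mem_insert_self a {b}
        have hwval : w = u ∆ {a} := by
          rw [← ha, symmDiff_symmDiff_cancel_left]
        have hwM : w ∈ M := by
          rcases Finset.mem_insert.mp hmem with rfl | hmem'
          · -- a = i, w = A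
            have : w = A := by
              rw [hwval, hu, symmDiff_assoc, symmDiff_self, symmDiff_bot]
            exact this ▸ hA
          · -- a = j, w = B
            have haj : a = j := Finset.mem_singleton.mp hmem'
            have : w = B := by
              rw [hwval, haj, hu, symmDiff_assoc, sd_pair hij, ← hD,
                symmDiff_symmDiff_cancel_left]
            exact this ▸ hB
        have hwsup : w ∈ (SimpleGraph.Walk.cons h1 (SimpleGraph.Walk.cons h2 SimpleGraph.Walk.nil)).support := by
          simp
        rcases hint w hwsup hwM with rfl | rfl
        · rw [symmDiff_self] at huw; simp at huw
        · rw [symmDiff_self] at hwv; simp at hwv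

lemma count_bound (M : Set (Finset (Fin n)))
    (hd : ∀ A ∈ M, ∀ B ∈ M, (A ∆ B).card ≠ 2) :
    M.ncard * n ≤ 2 ^ n := by
  classical
  have hfin : M.Finite := Set.toFinite M
  rw [Set.ncard_eq_toFinset_card' M]
  have key : (M.toFinset ×ˢ (Finset.univ : Finset (Fin n))).card ≤
      (Finset.univ : Finset (Finset (Fin n))).card := by
    apply Finset.card_le_card_of_injOn (fun p => p.1 ∆ {p.2})
    · intro _ _; exact Finset.mem_univ _
    · rintro ⟨A, i⟩ hAi ⟨B, j⟩ hBj heq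
      simp only [Finset.mem_coe, Finset.mem_product, Set.mem_toFinset] at hAi hBj
      have hAB : A ∆ B = {i} ∆ {j} := by
        have : (A ∆ B) ∆ ({i} ∆ {j}) = ⊥ := by
          rw [← sd_rearrange]
          exact symmDiff_eq_bot.mpr heq
        have := symmDiff_eq_bot.mp this
        exact this
      by_cases hij : i = j
      · subst hij
        rw [symmDiff_self] at hAB
        have : A = B := symmDiff_eq_bot.mp hAB
        simp [this]
      · exfalso
        apply hd A hAi.1 B hBj.1
        rw [hAB, sd_pair hij, Finset.card_insert_of_notMem (by simpa using hij),
          Finset.card_singleton]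
  rw [Finset.card_product, Finset.card_univ, Finset.card_univ, Fintype.card_fin,
    Fintype.card_finset, Fintype.card_fin] at key
  exact key

/-- For every `n ≥ 1`, `μ_t(Q_n) ≤ 2^n / n`. -/
theorem muTotal_hypercube_upper (n : ℕ) (hn : 1 ≤ n) :
    (muTotal n : ℝ) ≤ 2 ^ n / n := by
  have hnat : muTotal n ≤ 2 ^ n / n := by
    apply csSup_le'
    rintro k ⟨M, hM, rfl⟩
    rw [Nat.le_div_iff_mul_le hn]
    exact count_bound M (no_dist_two hM)
  calc (muTotal n : ℝ) ≤ ((2 ^ n / n : ℕ) : ℝ) := Nat.cast_le.mpr hnat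
    _ ≤ ((2 ^ n : ℕ) : ℝ) / ((n : ℕ) : ℝ) := Nat.cast_div_le
    _ = 2 ^ n / n := by push_cast; ring
end

section
/- For every natural number n ≥ 1, the total mutual-visibility number of the n-dimensional hypercube satisfies μ_t(Q_n) ≥ 2^(n−1) / n. -/
private lemma symmDiff_card_le_walk_length {n : ℕ} {u v : Finset (Fin n)}
    (p : (hypercube n).Walk u v) : (symmDiff u v).card ≤ p.length := by
  induction p with
  | nil => simp [symmDiff_self]
  | @cons a b c h q ih =>
    have h1 : symmDiff a c ⊆ symmDiff a b ∪ symmDiff b c := symmDiff_triangle a b c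
    have h2 : (symmDiff a b).card = 1 := h
    calc (symmDiff a c).card ≤ (symmDiff a b ∪ symmDiff b c).card := Finset.card_le_card h1
      _ ≤ (symmDiff a b).card + (symmDiff b c).card := Finset.card_union_le _ _
      _ ≤ 1 + q.length := by omega
      _ = (SimpleGraph.Walk.cons h q).length := by simp [SimpleGraph.Walk.length_cons]; omega

private lemma exists_good_walk {n : ℕ} {M : Set (Finset (Fin n))}
    (hM : ∀ A ∈ M, ∀ B ∈ M, (symmDiff A B).card ≠ 2) :
    ∀ (d : ℕ) (u v : Finset (Fin n)), (symmDiff u v).card = d →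
      ∃ p : (hypercube n).Walk u v, p.IsPath ∧ p.length = d ∧
        ∀ x ∈ p.support, x ∈ M → x = u ∨ x = v := by
  intro d
  induction d with
  | zero =>
    intro u v h
    have huv : u = v := by
      have h0 : symmDiff u v = ⊥ := Finset.card_eq_zero.mp h
      exact symmDiff_eq_bot.mp h0
    subst huv
    exact ⟨SimpleGraph.Walk.nil, SimpleGraph.Walk.IsPath.nil, by simp, by simp⟩
  | succ d ih =>
    intro u v h
    rcases Nat.eq_zero_or_pos d with hd0 | hdpos
    · subst hd0
      have hadj : (hypercube n).Adj u v := h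
      refine ⟨SimpleGraph.Walk.cons hadj SimpleGraph.Walk.nil, ?_, by simp, ?_⟩
      · rw [SimpleGraph.Walk.cons_isPath_iff]
        exact ⟨SimpleGraph.Walk.IsPath.nil, by simp [hadj.ne]⟩
      · intro x hx _
        simp only [SimpleGraph.Walk.support_cons, SimpleGraph.Walk.support_nil,
          List.mem_cons, List.mem_singleton] at hx
        tauto
    · -- d + 1 ≥ 2
      obtain ⟨e1, he1, e2, he2, hne⟩ := Finset.one_lt_card.mp (by omega : 1 < (symmDiff u v).card)
      -- at most one of the two candidates is in M
      have hcand : symmDiff u {e1} ∉ M ∨ symmDiff u {e2} ∉ M := by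
        by_contra hcon
        push_neg at hcon
        refine hM _ hcon.1 _ hcon.2 ?_
        have : symmDiff (symmDiff u {e1}) (symmDiff u {e2}) = ({e1, e2} : Finset (Fin n)) := by
          ext x
          simp only [Finset.mem_symmDiff, Finset.mem_singleton, Finset.mem_insert]
          by_cases hx1 : x = e1 <;> by_cases hx2 : x = e2 <;> simp_all <;> tauto
        rw [this]
        exact Finset.card_pair hne
      have key : ∀ e : Fin n, e ∈ symmDiff u v → symmDiff u {e} ∉ M →
          ∃ p : (hypercube n).Walk u v, p.IsPath ∧ p.length = d + 1 ∧
            ∀ x ∈ p.support, x ∈ M → x = u ∨ x = v := by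
        intro e he hwM
        set w := symmDiff u {e} with hw
        have hwv : (symmDiff w v).card = d := by
          have h1 : symmDiff w v = symmDiff (symmDiff u v) {e} := by
            rw [hw, symmDiff_assoc, symmDiff_comm {e} v, ← symmDiff_assoc]
          have h2 : symmDiff (symmDiff u v) {e} = (symmDiff u v).erase e := by
            ext x
            simp only [Finset.mem_symmDiff, Finset.mem_singleton, Finset.mem_erase]
            constructor
            · rintro (⟨hx, hxe⟩ | ⟨rfl, hx⟩)
              · exact ⟨hxe, hx⟩
              · exact absurd (Finset.mem_symmDiff.mp he) hx
            · rintro ⟨hxe, hx⟩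
              exact Or.inl ⟨hx, hxe⟩
          rw [h1, h2, Finset.card_erase_of_mem he, h]
          omega
        obtain ⟨p', hp', hl', hsup'⟩ := ih w v hwv
        have hadj : (hypercube n).Adj u w := by
          show (symmDiff u w).card = 1
          rw [hw, symmDiff_symmDiff_cancel_left, Finset.card_singleton]
        have hu_not : u ∉ p'.support := by
          intro hu
          have hle := SimpleGraph.Walk.length_dropUntil_le p' hu
          have hge := symmDiff_card_le_walk_length (p'.dropUntil u hu)
          omega
        refine ⟨SimpleGraph.Walk.cons hadj p', ?_, ?_, ?_⟩
        · rw [SimpleGraph.Walk.cons_isPath_iff]; exact ⟨hp', hu_not⟩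
        · simp [SimpleGraph.Walk.length_cons, hl']
        · intro x hx hxM
          rw [SimpleGraph.Walk.support_cons, List.mem_cons] at hx
          rcases hx with rfl | hx
          · exact Or.inl rfl
          · rcases hsup' x hx hxM with rfl | rfl
            · exact absurd hxM hwM
            · exact Or.inr rfl
      rcases hcand with hc | hc
      · exact key e1 he1 hc
      · exact key e2 he2 hc

private lemma totalMV_of_no_dist_two {n : ℕ} {M : Set (Finset (Fin n))}
    (hM : ∀ A ∈ M, ∀ B ∈ M, (symmDiff A B).card ≠ 2) :
    IsTotalMutualVisibilitySet (hypercube n) M := by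
  intro u v
  obtain ⟨p, hp, hl, hsup⟩ := exists_good_walk hM _ u v rfl
  have hd : (hypercube n).dist u v = (symmDiff u v).card := by
    apply le_antisymm
    · exact hl ▸ SimpleGraph.dist_le p
    · obtain ⟨q, hq⟩ := p.reachable.exists_walk_length_eq_dist
      exact hq ▸ symmDiff_card_le_walk_length q
  exact ⟨p, hp, by rw [hd, hl], hsup⟩

private def gvec (n k : ℕ) (i : Fin n) : Fin k → ZMod 2 :=
  fun j => if (i : ℕ).testBit (j : ℕ) then 1 else 0

private lemma gvec_inj (n : ℕ) : Function.Injective (gvec n (Nat.clog 2 n)) := by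
  intro a b hab
  have hn2k : n ≤ 2 ^ Nat.clog 2 n := Nat.le_pow_clog one_lt_two n
  apply Fin.ext
  apply Nat.eq_of_testBit_eq
  intro j
  by_cases hj : j < Nat.clog 2 n
  · have hj' := congrFun hab ⟨j, hj⟩
    simp only [gvec] at hj'
    by_cases h1 : (a : ℕ).testBit j <;> by_cases h2 : (b : ℕ).testBit j <;> simp_all
  · have ha : (a : ℕ) < 2 ^ j :=
      lt_of_lt_of_le (lt_of_lt_of_le a.isLt hn2k)
        (Nat.pow_le_pow_right (by norm_num) (le_of_not_gt hj))
    have hb : (b : ℕ) < 2 ^ j :=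
      lt_of_lt_of_le (lt_of_lt_of_le b.isLt hn2k)
        (Nat.pow_le_pow_right (by norm_num) (le_of_not_gt hj))
    rw [Nat.testBit_lt_two_pow ha, Nat.testBit_lt_two_pow hb]

private def phi (n : ℕ) (A : Finset (Fin n)) : Fin (Nat.clog 2 n) → ZMod 2 :=
  ∑ i ∈ A, gvec n (Nat.clog 2 n) i

private lemma phi_fiber_no_two (n : ℕ) (c : Fin (Nat.clog 2 n) → ZMod 2) :
    ∀ A, phi n A = c → ∀ B, phi n B = c → (symmDiff A B).card ≠ 2 := by
  intro A hA B hB hcard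
  have hz : ∀ a b : ZMod 2, a + b = 0 → a = b := by decide
  have cancel : ∀ x y : Fin n,
      gvec n (Nat.clog 2 n) x + gvec n (Nat.clog 2 n) y = 0 → x = y := by
    intro x y hxy
    apply gvec_inj n
    funext j
    have hj := congrFun hxy j
    simp only [Pi.add_apply, Pi.zero_apply] at hj
    exact hz _ _ hj
  have hS : ∑ i ∈ A \ B, gvec n (Nat.clog 2 n) i = ∑ i ∈ B \ A, gvec n (Nat.clog 2 n) i := by
    have h1 : ∑ i ∈ A ∩ B, gvec n (Nat.clog 2 n) i + ∑ i ∈ A \ B, gvec n (Nat.clog 2 n) i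
        = phi n A := Finset.sum_inter_add_sum_sdiff A B _
    have h2 : ∑ i ∈ B ∩ A, gvec n (Nat.clog 2 n) i + ∑ i ∈ B \ A, gvec n (Nat.clog 2 n) i
        = phi n B := Finset.sum_inter_add_sum_sdiff B A _
    rw [Finset.inter_comm] at h2
    rw [hA] at h1
    rw [hB] at h2
    exact add_left_cancel (h1.trans h2.symm)
  have hdisj : Disjoint (A \ B) (B \ A) := disjoint_sdiff_sdiff
  have hcards : (A \ B).card + (B \ A).card = 2 := by
    rw [← Finset.card_union_of_disjoint hdisj]
    rw [← Finset.sup_eq_union, ← symmDiff_def]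
    exact hcard
  rcases Nat.lt_or_ge (A \ B).card 1 with h0 | h1
  · -- (A\B) empty, (B\A) has two elements
    have hAB : A \ B = ∅ := Finset.card_eq_zero.mp (by omega)
    obtain ⟨x, y, hxy, hset⟩ := Finset.card_eq_two.mp (show (B \ A).card = 2 by omega)
    rw [hAB, hset, Finset.sum_empty, Finset.sum_pair hxy] at hS
    exact hxy (cancel x y hS.symm)
  · rcases Nat.lt_or_ge (A \ B).card 2 with h1' | h2'
    · -- both singletons
      obtain ⟨x, hx⟩ := Finset.card_eq_one.mp (show (A \ B).card = 1 by omega)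
      obtain ⟨y, hy⟩ := Finset.card_eq_one.mp (show (B \ A).card = 1 by omega)
      rw [hx, hy, Finset.sum_singleton, Finset.sum_singleton] at hS
      have hxy : x = y := gvec_inj n hS
      have hxm : x ∈ A \ B := by rw [hx]; exact Finset.mem_singleton_self x
      have hym : y ∈ B \ A := by rw [hy]; exact Finset.mem_singleton_self y
      rw [hxy] at hxm
      exact (Finset.mem_sdiff.mp hym).2 (Finset.mem_sdiff.mp hxm).1
    · -- (A\B) has two elements, (B\A) empty
      have hBA : B \ A = ∅ := Finset.card_eq_zero.mp (by omega)
      obtain ⟨x, y, hxy, hset⟩ := Finset.card_eq_two.mp (show (A \ B).card = 2 by omega)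
      rw [hBA, hset, Finset.sum_empty, Finset.sum_pair hxy] at hS
      exact hxy (cancel x y hS)

private lemma exists_big_fiber (n : ℕ) :
    ∃ M : Set (Finset (Fin n)), IsTotalMutualVisibilitySet (hypercube n) M ∧
      2 ^ (n - Nat.clog 2 n) ≤ M.ncard := by
  set k := Nat.clog 2 n with hk
  have hkn : k ≤ n := (Nat.clog_le_iff_le_pow one_lt_two).mpr (Nat.lt_two_pow_self (n := n)).le
  have hcard : (Finset.univ : Finset (Fin k → ZMod 2)).card * 2 ^ (n - k)
      ≤ (Finset.univ : Finset (Finset (Fin n))).card := by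
    rw [Finset.card_univ, Finset.card_univ, Fintype.card_finset, Fintype.card_fin,
      Fintype.card_fun, ZMod.card, Fintype.card_fin, ← pow_add]
    have : k + (n - k) = n := by omega
    rw [this]
  obtain ⟨c, -, hc⟩ := Finset.exists_le_card_fiber_of_mul_le_card_of_maps_to
    (f := phi n) (fun a _ => Finset.mem_univ _) Finset.univ_nonempty hcard
  refine ⟨↑(Finset.univ.filter fun A => phi n A = c), ?_, ?_⟩
  · apply totalMV_of_no_dist_two
    intro A hA B hB
    have hA' : phi n A = c := (Finset.mem_filter.mp (Finset.mem_coe.mp hA)).2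
    have hB' : phi n B = c := (Finset.mem_filter.mp (Finset.mem_coe.mp hB)).2
    exact phi_fiber_no_two n c A hA' B hB'
  · rw [Set.ncard_coe_finset]
    exact hc

/-- For every `n ≥ 1`, `μ_t(Q_n) ≥ 2^(n−1) / n`. -/
theorem muTotal_hypercube_lower (n : ℕ) (hn : 1 ≤ n) :
    (2 : ℝ) ^ (n - 1) / n ≤ (muTotal n : ℝ) := by
  obtain ⟨M, hM, hMcard⟩ := exists_big_fiber n
  set k := Nat.clog 2 n with hk
  have hkn : k ≤ n := (Nat.clog_le_iff_le_pow one_lt_two).mpr (Nat.lt_two_pow_self (n := n)).le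
  have hbdd : BddAbove {m | ∃ M : Set (Finset (Fin n)),
      IsTotalMutualVisibilitySet (hypercube n) M ∧ M.ncard = m} := by
    refine ⟨2 ^ n, ?_⟩
    rintro m ⟨N, -, rfl⟩
    calc N.ncard ≤ (Set.univ : Set (Finset (Fin n))).ncard :=
        Set.ncard_le_ncard (Set.subset_univ _) Set.finite_univ
      _ = 2 ^ n := by
        rw [Set.ncard_univ, Nat.card_eq_fintype_card, Fintype.card_finset, Fintype.card_fin]
  have hmu : 2 ^ (n - k) ≤ muTotal n :=
    le_trans hMcard (le_csSup hbdd ⟨M, hM, rfl⟩)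
  have h2k : 2 ^ k ≤ 2 * n := by
    rcases eq_or_lt_of_le hn with h1 | h1
    · have hk0 : k = 0 := by rw [hk, ← h1]; exact Nat.clog_one_right 2
      rw [hk0]; omega
    · have hlt : 2 ^ (k - 1) < n := Nat.pow_pred_clog_lt_self one_lt_two h1
      have hkpos : 0 < k := Nat.clog_pos one_lt_two (by omega)
      have he : 2 ^ k = 2 * 2 ^ (k - 1) := by
        conv_lhs => rw [show k = (k - 1) + 1 by omega]
        rw [pow_succ]; ring
      omega
  have hnat : 2 ^ (n - 1) ≤ muTotal n * n := by
    have e1 : 2 ^ (n - 1) * 2 = 2 ^ n := by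
      rw [← pow_succ]; congr 1; omega
    have e2 : 2 ^ (n - k) * 2 ^ k = 2 ^ n := by
      rw [← pow_add]; congr 1; omega
    have h3 : 2 ^ (n - 1) * 2 ≤ (2 ^ (n - k) * n) * 2 := by
      calc 2 ^ (n - 1) * 2 = 2 ^ (n - k) * 2 ^ k := by rw [e1, e2]
        _ ≤ 2 ^ (n - k) * (2 * n) := Nat.mul_le_mul_left _ h2k
        _ = (2 ^ (n - k) * n) * 2 := by ring
    have h4 : 2 ^ (n - 1) ≤ 2 ^ (n - k) * n := by omega
    calc 2 ^ (n - 1) ≤ 2 ^ (n - k) * n := h4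
      _ ≤ muTotal n * n := Nat.mul_le_mul_right _ hmu
  have hnpos : (0 : ℝ) < n := by
    have : (1 : ℝ) ≤ n := by exact_mod_cast hn
    linarith
  rw [div_le_iff₀ hnpos]
  calc (2 : ℝ) ^ (n - 1) = ((2 ^ (n - 1) : ℕ) : ℝ) := by push_cast; ring
    _ ≤ ((muTotal n * n : ℕ) : ℝ) := by exact_mod_cast hnat
    _ = (muTotal n : ℝ) * n := by push_cast; ring
end

section
/- Let n, d ∈ ℕ with n ≥ d ≥ 3. For each r with d ≤ r ≤ n−d let F_r be an arbitrary subfamily of the layer L_r of Q_n containing no (r,2d,d)-daisy, and for r ≤ d−1 or r ≥ n−d+1 let F_r = L_r. Then for every integer λ, the set M(λ) = ∪_{r ≡ λ (mod d)} F_r is a mutual-visibility set in Q_n. -/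
namespace DaisyMV

open Finset List

lemma perm_toFinset {α : Type*} [DecidableEq α] {l₁ l₂ : List α} (h : l₁.Perm l₂) :
    l₁.toFinset = l₂.toFinset := by
  ext x; simp [List.mem_toFinset, h.mem_iff]

variable {n : ℕ}

lemma adj_flip (u : Finset (Fin n)) (x : Fin n) :
    (hypercube n).Adj u (symmDiff u {x}) := by
  show (symmDiff u (symmDiff u {x})).card = 1
  rw [symmDiff_symmDiff_cancel_left]
  simp

def XorL (u : Finset (Fin n)) (l : List (Fin n)) : Finset (Fin n) :=
  l.foldl (fun s x => symmDiff s {x}) u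

@[simp] lemma XorL_nil (u : Finset (Fin n)) : XorL u [] = u := rfl

lemma XorL_cons (u : Finset (Fin n)) (x : Fin n) (l : List (Fin n)) :
    XorL u (x :: l) = XorL (symmDiff u {x}) l := rfl

lemma singleton_symmDiff {x : Fin n} {s : Finset (Fin n)} (h : x ∉ s) :
    symmDiff {x} s = insert x s := by
  ext y
  simp only [Finset.mem_symmDiff, Finset.mem_singleton, Finset.mem_insert]
  constructor
  · rintro (⟨rfl, -⟩ | ⟨hy, -⟩)
    · exact Or.inl rfl
    · exact Or.inr hy
  · rintro (rfl | hy)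
    · exact Or.inl ⟨rfl, h⟩
    · exact Or.inr ⟨hy, fun he => h (he ▸ hy)⟩

lemma XorL_eq (u : Finset (Fin n)) : ∀ (l : List (Fin n)), l.Nodup →
    XorL u l = symmDiff u l.toFinset := by
  intro l
  induction l generalizing u with
  | nil =>
    intro _
    rw [List.toFinset_nil, show (∅ : Finset (Fin n)) = ⊥ from rfl, symmDiff_bot]
    rfl
  | cons x l ih =>
    intro h
    rw [XorL_cons, ih _ (List.nodup_cons.mp h).2, symmDiff_assoc,
      singleton_symmDiff (by simpa using (List.nodup_cons.mp h).1 : x ∉ l.toFinset)]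
    simp

def flipWalk (u : Finset (Fin n)) : (l : List (Fin n)) → (hypercube n).Walk u (XorL u l)
  | [] => SimpleGraph.Walk.nil
  | x :: l => SimpleGraph.Walk.cons (adj_flip u x) (flipWalk (symmDiff u {x}) l)

lemma flipWalk_length (u : Finset (Fin n)) : ∀ l, (flipWalk u l).length = l.length := by
  intro l
  induction l generalizing u with
  | nil => rfl
  | cons x l ih =>
    show (SimpleGraph.Walk.cons (adj_flip u x) (flipWalk (symmDiff u {x}) l)).length = _
    simp [ih]

lemma flipWalk_support (u : Finset (Fin n)) :
    ∀ l w, w ∈ (flipWalk u l).support → ∃ t, t <+: l ∧ w = XorL u t := by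
  intro l
  induction l generalizing u with
  | nil =>
    intro w hw
    simp [flipWalk] at hw
    exact ⟨[], List.nil_prefix, hw⟩
  | cons x l ih =>
    intro w hw
    change w ∈ (SimpleGraph.Walk.cons (adj_flip u x) (flipWalk (symmDiff u {x}) l)).support at hw
    rw [SimpleGraph.Walk.support_cons, List.mem_cons] at hw
    rcases hw with rfl | hw
    · exact ⟨[], List.nil_prefix, rfl⟩
    · obtain ⟨t, ht, rfl⟩ := ih _ w hw
      exact ⟨x :: t, List.cons_prefix_cons.mpr ⟨rfl, ht⟩, rfl⟩

lemma flipWalk_isPath (u : Finset (Fin n)) : ∀ l, l.Nodup → (flipWalk u l).IsPath := by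
  intro l
  induction l generalizing u with
  | nil => intro _; exact SimpleGraph.Walk.IsPath.nil
  | cons x l ih =>
    intro h
    show (SimpleGraph.Walk.cons (adj_flip u x) (flipWalk (symmDiff u {x}) l)).IsPath
    rw [SimpleGraph.Walk.cons_isPath_iff]
    refine ⟨ih _ (List.nodup_cons.mp h).2, ?_⟩
    intro hu
    obtain ⟨t, ht, htu⟩ := flipWalk_support _ l u hu
    have htnd : t.Nodup := ht.sublist.nodup (List.nodup_cons.mp h).2
    have hxt : x ∉ t.toFinset := by
      simp only [List.mem_toFinset]
      intro hx
      exact (List.nodup_cons.mp h).1 (ht.sublist.subset hx)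
    rw [XorL_eq _ t htnd, symmDiff_assoc, singleton_symmDiff hxt] at htu
    have := (symmDiff_eq_left.mp htu.symm)
    exact Finset.insert_ne_empty x t.toFinset this

lemma card_symmDiff_le_length : ∀ {u v : Finset (Fin n)} (p : (hypercube n).Walk u v),
    (symmDiff u v).card ≤ p.length := by
  intro u v p
  induction p with
  | nil => simp
  | @cons u w v h p ih =>
    have h1 : (symmDiff u w).card = 1 := h
    have tri : (symmDiff u v) ⊆ (symmDiff u w) ∪ (symmDiff w v) := by
      simpa [Finset.sup_eq_union] using symmDiff_triangle u w v
    have h2 := Finset.card_le_card tri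
    have h3 := Finset.card_union_le (symmDiff u w) (symmDiff w v)
    rw [SimpleGraph.Walk.length_cons]
    omega

lemma symmDiff_union_eq {u X Y : Finset (Fin n)} (hX : X ⊆ u) (hY : Disjoint Y u) :
    symmDiff u (X ∪ Y) = (u \ X) ∪ Y := by
  ext z
  simp only [Finset.mem_symmDiff, Finset.mem_union, Finset.mem_sdiff]
  have h1 : z ∈ X → z ∈ u := @hX z
  have h2 : z ∈ Y → z ∉ u := fun h hu => (Finset.disjoint_left.mp hY) h hu
  tauto

lemma card_symmDiff_union {u X Y : Finset (Fin n)} (hX : X ⊆ u) (hY : Disjoint Y u) :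
    (symmDiff u (X ∪ Y)).card = u.card - X.card + Y.card := by
  rw [symmDiff_union_eq hX hY,
    Finset.card_union_of_disjoint (hY.symm.mono_left Finset.sdiff_subset),
    Finset.card_sdiff_of_subset hX]

def mix {α : Type*} : List α → List α → List α
  | [], ys => ys
  | xs, [] => xs
  | x :: xs, y :: ys => y :: x :: mix xs ys

@[simp] lemma mix_nil_left {α : Type*} (ys : List α) : mix [] ys = ys := by cases ys <;> rfl

@[simp] lemma mix_nil_right {α : Type*} (xs : List α) : mix xs [] = xs := by cases xs <;> rfl

@[simp] lemma mix_cons_cons {α : Type*} (x y : α) (xs ys : List α) :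
    mix (x :: xs) (y :: ys) = y :: x :: mix xs ys := rfl

lemma mix_perm {α : Type*} : ∀ (xs ys : List α), (mix xs ys).Perm (xs ++ ys) := by
  intro xs
  induction xs with
  | nil => intro ys; simp
  | cons x xs ih =>
    intro ys
    cases ys with
    | nil => simp
    | cons y ys =>
      rw [mix_cons_cons]
      exact (((ih ys).cons x).cons y).trans (List.perm_middle (a := y) (l₁ := x :: xs) (l₂ := ys)).symm

lemma mix_prefix {α : Type*} : ∀ (xs ys t : List α), xs.length ≤ ys.length + 1 →
    t <+: mix xs ys →
    ∃ xs' ys', xs' <+: xs ∧ ys' <+: ys ∧ t.Perm (xs' ++ ys') ∧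
      (xs'.length ≤ ys'.length ∨ (xs' = xs ∧ ys' = ys)) ∧
      (ys'.length ≤ xs'.length + 1 ∨ xs' = xs) := by
  intro xs
  induction xs with
  | nil =>
    intro ys t _ ht
    rw [mix_nil_left] at ht
    exact ⟨[], t, List.nil_prefix, ht, by simp, Or.inl (by simp), Or.inr rfl⟩
  | cons x xs ih =>
    intro ys t hlen ht
    cases ys with
    | nil =>
      have hxs : xs = [] := by
        have : xs.length = 0 := by
          have h := hlen
          simp only [List.length_cons, List.length_nil] at h
          omega
        exact List.length_eq_zero_iff.mp this
      subst hxs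
      rw [mix_nil_right] at ht
      cases t with
      | nil => exact ⟨[], [], List.nil_prefix, List.nil_prefix, by simp, Or.inl le_rfl, Or.inl (by simp)⟩
      | cons a t' =>
        obtain ⟨rfl, ht'⟩ := List.cons_prefix_cons.mp ht
        rw [List.prefix_nil] at ht'
        subst ht'
        exact ⟨[a], [], List.prefix_refl _, List.nil_prefix, by simp, Or.inr ⟨rfl, rfl⟩, Or.inl (by simp)⟩
    | cons y ys =>
      rw [mix_cons_cons] at ht
      cases t with
      | nil => exact ⟨[], [], List.nil_prefix, List.nil_prefix, by simp, Or.inl le_rfl, Or.inl (by simp)⟩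
      | cons a t₁ =>
        obtain ⟨rfl, ht₁⟩ := List.cons_prefix_cons.mp ht
        cases t₁ with
        | nil =>
          exact ⟨[], [a], List.nil_prefix, List.cons_prefix_cons.mpr ⟨rfl, List.nil_prefix⟩,
            by simp, Or.inl (by simp), Or.inl (by simp)⟩
        | cons b t₂ =>
          obtain ⟨rfl, ht₂⟩ := List.cons_prefix_cons.mp ht₁
          have hlen' : xs.length ≤ ys.length + 1 := by simp at hlen; omega
          obtain ⟨xs', ys', h1, h2, h3, h4, h5⟩ := ih ys t₂ hlen' ht₂
          refine ⟨b :: xs', a :: ys', List.cons_prefix_cons.mpr ⟨rfl, h1⟩,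
            List.cons_prefix_cons.mpr ⟨rfl, h2⟩, ?_, ?_, ?_⟩
          · exact (((h3.cons b).cons a)).trans
              (List.perm_middle (a := a) (l₁ := b :: xs') (l₂ := ys')).symm
          · rcases h4 with h | ⟨h, h'⟩
            · exact Or.inl (by simp; omega)
            · exact Or.inr ⟨by rw [h], by rw [h']⟩
          · rcases h5 with h | h
            · exact Or.inl (by simp; omega)
            · exact Or.inr (by rw [h])

lemma prefix_append_cases {α : Type*} : ∀ (l₁ l₂ t : List α), t <+: l₁ ++ l₂ →
    t <+: l₁ ∨ ∃ t₂, t = l₁ ++ t₂ ∧ t₂ <+: l₂ := by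
  intro l₁
  induction l₁ with
  | nil => intro l₂ t h; exact Or.inr ⟨t, rfl, h⟩
  | cons a l₁ ih =>
    intro l₂ t h
    cases t with
    | nil => exact Or.inl List.nil_prefix
    | cons b t =>
      rw [List.cons_append] at h
      obtain ⟨rfl, h'⟩ := List.cons_prefix_cons.mp h
      rcases ih l₂ t h' with h'' | ⟨t₂, rfl, ht₂⟩
      · exact Or.inl (List.cons_prefix_cons.mpr ⟨rfl, h''⟩)
      · exact Or.inr ⟨t₂, rfl, ht₂⟩

lemma mod_helper {d : ℕ} (hd : 0 < d) {a j lam : ℤ} (ha : a % d = lam % d)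
    (hj1 : 0 < j) (hj2 : j < d) : (a + j) % d ≠ lam % d := by
  intro h
  have h2 : (a + j) % d = a % d := h.trans ha.symm
  have h3 : (d : ℤ) ∣ (a + j - a) :=
    Int.dvd_of_emod_eq_zero (Int.emod_eq_emod_iff_emod_sub_eq_zero.mp h2)
  have h4 : (d : ℤ) ∣ j := by simpa using h3
  have := Int.le_of_dvd hj1 h4
  omega

end DaisyMV

open DaisyMV


/-- **Key Lemma.** Let `n ≥ d ≥ 3`. Suppose `F r` is a `D_r(2d,d)`-free family of
`r`-subsets of `[n]` for `d ≤ r ≤ n−d`, and `F r` is the full layer `L_r` for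
`r ≤ d−1` or `r ≥ n−d+1`. Then for every integer `λ`, the union
`M(λ) = ∪_{r ≡ λ (mod d)} F r` is a mutual-visibility set in `Q_n`. -/
theorem construction_isMutualVisibilitySet (n d : ℕ) (hd : 3 ≤ d) (hn : d ≤ n)
    (F : ℕ → Finset (Finset (Fin n)))
    (hfree : ∀ r : ℕ, d ≤ r → r ≤ n - d →
      (∀ T ∈ F r, T.card = r) ∧ ¬ ContainsDaisy n r (2 * d) d (F r))
    (hfull : ∀ r : ℕ, r ≤ n → (r < d ∨ n - d < r) →
      F r = Finset.univ.filter (fun A : Finset (Fin n) => A.card = r))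
    (lam : ℤ) :
    IsMutualVisibilitySet (hypercube n)
      {A : Finset (Fin n) | ∃ r : ℕ, r ≤ n ∧ (r : ℤ) % d = lam % d ∧ A ∈ F r} := by
  classical
  set M : Set (Finset (Fin n)) :=
    {A : Finset (Fin n) | ∃ r : ℕ, r ≤ n ∧ (r : ℤ) % d = lam % d ∧ A ∈ F r} with hMdef
  have hdpos : 0 < d := by omega
  have hcard_le : ∀ s : Finset (Fin n), s.card ≤ n := fun s => by
    simpa using Finset.card_le_univ s
  have hMcard : ∀ A ∈ M, (A.card : ℤ) % d = lam % d ∧ A ∈ F A.card := by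
    rintro A ⟨r, hr, hrm, hAF⟩
    have hcr : A.card = r := by
      by_cases h1 : d ≤ r ∧ r ≤ n - d
      · exact (hfree r h1.1 h1.2).1 A hAF
      · have h2 := hfull r hr (by omega)
        rw [h2, Finset.mem_filter] at hAF
        exact hAF.2
    rw [hcr]; exact ⟨hrm, hAF⟩
  have notM_card : ∀ w : Finset (Fin n), (w.card : ℤ) % d ≠ lam % d → w ∉ M :=
    fun w h hw => h (hMcard w hw).1
  have notM_F : ∀ w : Finset (Fin n), w ∉ F w.card → w ∉ M :=
    fun w h hw => h (hMcard w hw).2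
  -- escape from daisy-free families
  have hesc : ∀ A B : Finset (Fin n), A ⊆ B → B.card = A.card + 2 * d → A.card + 2 * d ≤ n →
      ∃ T, A ⊆ T ∧ T ⊆ B ∧ T.card = A.card + d ∧ T ∉ M := by
    intro A B hAB hB h2
    by_contra hcon
    push_neg at hcon
    refine (hfree (A.card + d) (by omega) (by omega)).2
      ⟨A, B, hAB, by omega, by omega, fun T hT1 hT2 hT3 => ?_⟩
    have hTM : T ∈ M := hcon T hT1 hT2 hT3
    have := (hMcard T hTM).2
    rwa [hT3] at this
  -- base construction : one band
  have base : ∀ (e : ℕ), e ≤ d → ∀ u v : Finset (Fin n), (v \ u).Nonempty →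
      (v \ u).card = (u \ v).card + e → (u.card : ℤ) % d = lam % d →
      ∃ l : List (Fin n), l.Nodup ∧ l.toFinset = symmDiff u v ∧
        ∀ t, t <+: l → t ≠ [] → t ≠ l → symmDiff u t.toFinset ∉ M := by
    intro e he u v hQne hqp hmod
    obtain ⟨y0, ys, hys⟩ := List.exists_cons_of_ne_nil
      (show (v \ u).toList ≠ [] by
        simp only [ne_eq, Finset.toList_eq_nil]
        exact hQne.ne_empty)
    set xs : List (Fin n) := (u \ v).toList with hxs
    have hxsnd : xs.Nodup := Finset.nodup_toList _
    have hQnd : ((v \ u).toList).Nodup := Finset.nodup_toList _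
    rw [hys] at hQnd
    have hy0ys : y0 ∉ ys := (List.nodup_cons.mp hQnd).1
    have hysnd : ys.Nodup := (List.nodup_cons.mp hQnd).2
    have hperm : (y0 :: mix xs ys).Perm (xs ++ (v \ u).toList) := by
      rw [hys]
      exact ((mix_perm xs ys).cons y0).trans
        (List.perm_middle (a := y0) (l₁ := xs) (l₂ := ys)).symm
    have hxs_len : xs.length = (u \ v).card := Finset.length_toList _
    have hys_len : ys.length + 1 = (v \ u).card := by
      have h := Finset.length_toList (v \ u)
      rw [hys] at h
      simpa using h
    refine ⟨y0 :: mix xs ys, ?_, ?_, ?_⟩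
    · refine hperm.nodup_iff.mpr (List.Nodup.append hxsnd (Finset.nodup_toList _) ?_)
      intro a ha hb
      have h1 : a ∈ u \ v := by rwa [Finset.mem_toList] at ha
      have h2 : a ∈ v \ u := by rwa [Finset.mem_toList] at hb
      simp only [Finset.mem_sdiff] at h1 h2
      exact h2.2 h1.1
    · rw [perm_toFinset hperm, List.toFinset_append, Finset.toList_toFinset,
        Finset.toList_toFinset]
      ext z
      simp only [Finset.mem_union, Finset.mem_sdiff, Finset.mem_symmDiff]
    · intro t ht htne htl
      cases t with
      | nil => exact absurd rfl htne
      | cons a t' =>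
      obtain ⟨heq0, ht'⟩ := List.cons_prefix_cons.mp ht
      rw [heq0] at htl ⊢
      have hlen : xs.length ≤ ys.length + 1 := by omega
      obtain ⟨xs', ys', hp1, hp2, hp3, hp4, hp5⟩ := mix_prefix xs ys t' hlen ht'
      have hnotfull : ¬(xs' = xs ∧ ys' = ys) := by
        rintro ⟨h1, h2⟩
        apply htl
        have hlt : t'.length = (mix xs ys).length := by
          have e1 := hp3.length_eq
          have e2 := (mix_perm xs ys).length_eq
          rw [List.length_append] at e1
          rw [List.length_append] at e2
          rw [h1] at e1
          rw [h2] at e1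
          omega
        rw [List.IsPrefix.eq_of_length ht' hlt]
      set X := xs'.toFinset with hX
      set Y := insert y0 ys'.toFinset with hY
      have hXsub : X ⊆ u \ v := by
        intro z hz
        rw [hX, List.mem_toFinset] at hz
        have := hp1.sublist.subset hz
        rwa [hxs, Finset.mem_toList] at this
      have hYsub : Y ⊆ v \ u := by
        intro z hz
        rw [hY, Finset.mem_insert, List.mem_toFinset] at hz
        have hz' : z ∈ y0 :: ys := by
          rcases hz with rfl | h
          · exact List.mem_cons_self
          · exact List.mem_cons_of_mem _ (hp2.sublist.subset h)
        rw [← hys, Finset.mem_toList] at hz'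
        exact hz'
      have htfin : ((y0 :: t').toFinset : Finset (Fin n)) = X ∪ Y := by
        rw [List.toFinset_cons, perm_toFinset hp3, List.toFinset_append, hX, hY,
          Finset.union_insert]
      have hXc : X.card = xs'.length :=
        List.toFinset_card_of_nodup (hp1.sublist.nodup hxsnd)
      have hYc : Y.card = ys'.length + 1 := by
        rw [hY, Finset.card_insert_of_notMem
          (by rw [List.mem_toFinset]; exact fun h => hy0ys (hp2.sublist.subset h)),
          List.toFinset_card_of_nodup (hp2.sublist.nodup hysnd)]
      have hXu : X ⊆ u := hXsub.trans (Finset.sdiff_subset)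
      have hYu : Disjoint Y u := by
        rw [Finset.disjoint_left]
        intro z hz hzu
        have := hYsub hz
        rw [Finset.mem_sdiff] at this
        exact this.2 hzu
      have hcardw : (symmDiff u ((y0 :: t').toFinset)).card = u.card - X.card + Y.card := by
        rw [htfin]; exact card_symmDiff_union hXu hYu
      have hxle : xs'.length ≤ ys'.length := by
        rcases hp4 with h | h
        · exact h
        · exact absurd h hnotfull
      have hx_le : xs'.length ≤ xs.length := hp1.length_le
      have hy_le : ys'.length ≤ ys.length := hp2.length_le
      have hXle_u : X.card ≤ u.card := Finset.card_le_card hXu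
      -- upper bound on the excess
      have hmu : ys'.length + 1 ≤ xs'.length + (d - 1) := by
        rcases hp5 with h | h
        · omega
        · -- xs' = xs, so ys' is not full
          have hxfull : xs'.length = xs.length := by rw [h]
          have hysnf : ys'.length < ys.length := by
            rcases lt_or_eq_of_le hy_le with h' | h'
            · exact h'
            · exact absurd ⟨h, List.IsPrefix.eq_of_length hp2 h'⟩ hnotfull
          omega
      apply notM_card
      have hwz : ((symmDiff u ((y0 :: t').toFinset)).card : ℤ)
          = (u.card : ℤ) + (((ys'.length : ℤ) + 1) - (xs'.length : ℤ)) := by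
        rw [hcardw]
        omega
      rw [hwz]
      exact mod_helper hdpos hmod (by omega) (by omega)
  -- the core induction on the number of crossed levels
  have core : ∀ (k : ℕ) (u v : Finset (Fin n)), v.card = u.card + k * d →
      (u.card : ℤ) % d = lam % d →
      ∃ l : List (Fin n), l.Nodup ∧ l.toFinset = symmDiff u v ∧
        ∀ t, t <+: l → t ≠ [] → t ≠ l → symmDiff u t.toFinset ∉ M := by
    intro k
    induction k with
    | zero =>
      intro u v hc hm
      by_cases huv : u = v
      · subst huv
        refine ⟨[], List.nodup_nil, by simp, fun t ht h1 _ => absurd (List.prefix_nil.mp ht) h1⟩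
      · have hQ : (v \ u).Nonempty := by
          rw [Finset.sdiff_nonempty]
          intro hsub
          exact huv (Finset.eq_of_subset_of_card_le hsub (by omega)).symm
        have hcards : (v \ u).card = (u \ v).card + 0 := by
          have h1 := Finset.card_sdiff_add_card_inter v u
          have h2 := Finset.card_sdiff_add_card_inter u v
          have h3 : (v ∩ u).card = (u ∩ v).card := by rw [Finset.inter_comm]
          omega
        exact base 0 (by omega) u v hQ hcards hm
    | succ k ih =>
      intro u v hc hm
      rcases Nat.eq_zero_or_pos k with rfl | hk
      · have hc' : v.card = u.card + d := by simpa using hc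
        have hQ : (v \ u).Nonempty := by
          rw [Finset.sdiff_nonempty]
          intro hsub
          have := Finset.card_le_card hsub
          omega
        have hcards : (v \ u).card = (u \ v).card + d := by
          have h1 := Finset.card_sdiff_add_card_inter v u
          have h2 := Finset.card_sdiff_add_card_inter u v
          have h3 : (v ∩ u).card = (u ∩ v).card := by rw [Finset.inter_comm]
          omega
        exact base d le_rfl u v hQ hcards hm
      · obtain ⟨K, hK2d, hcK⟩ : ∃ K : ℕ, 2 * d ≤ K ∧ v.card = u.card + K :=
          ⟨(k + 1) * d, by nlinarith, hc⟩
        have hvn : v.card ≤ n := hcard_le v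
        have h2d : 2 * d ≤ (v \ u).card := by
          have h1 := Finset.card_sdiff_add_card v u
          have h2 : v.card ≤ (v ∪ u).card := Finset.card_le_card Finset.subset_union_left
          omega
        obtain ⟨S, hS, hScard⟩ := Finset.exists_subset_card_eq h2d
        have hSu : Disjoint u S := by
          rw [Finset.disjoint_right]
          intro z hz
          have := hS hz
          rw [Finset.mem_sdiff] at this
          exact this.2
        have hBcard : (u ∪ S).card = u.card + 2 * d := by
          rw [Finset.card_union_of_disjoint hSu, hScard]
        obtain ⟨T, hT1, hT2, hT3, hT4⟩ :=
          hesc u (u ∪ S) Finset.subset_union_left hBcard (by omega)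
        have hmod' : (T.card : ℤ) % d = lam % d := by
          rw [hT3]
          push_cast
          rw [show (u.card : ℤ) + (d : ℤ) = (u.card : ℤ) + (d : ℤ) * 1 by ring,
            Int.add_mul_emod_self_left]
          exact hm
        have hcrec : v.card = T.card + k * d := by
          rw [hT3, hc, Nat.succ_mul]
          ring
        obtain ⟨l', hl1, hl2, hl3⟩ := ih T v hcrec hmod'
        have hTuS : T \ u ⊆ S := by
          intro z hz
          rw [Finset.mem_sdiff] at hz
          rcases Finset.mem_union.mp (hT2 hz.1) with h | h
          · exact absurd h hz.2
          · exact h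
        have hTu_vu : T \ u ⊆ v \ u := fun z hz => hS (hTuS hz)
        have hTucard : (T \ u).card = d := by
          rw [Finset.card_sdiff_of_subset hT1, hT3]
          omega
        have hTuv : T \ u ⊆ v := fun z hz => (Finset.mem_sdiff.mp (hTu_vu hz)).1
        have hTnotM : T ∉ M := hT4
        have hdisj : ∀ z, z ∈ T \ u → z ∉ symmDiff T v := by
          intro z hz hzs
          have h1 : z ∈ T := (Finset.mem_sdiff.mp hz).1
          have h2 : z ∈ v := hTuv hz
          rw [Finset.mem_symmDiff] at hzs
          tauto
        refine ⟨(T \ u).toList ++ l', ?_, ?_, ?_⟩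
        · refine List.Nodup.append (Finset.nodup_toList _) hl1 ?_
          intro z hz hz2
          have h1 : z ∈ T \ u := by rwa [Finset.mem_toList] at hz
          have h2 : z ∈ symmDiff T v := by
            rw [← hl2, List.mem_toFinset]
            exact hz2
          exact hdisj z h1 h2
        · rw [List.toFinset_append, Finset.toList_toFinset, hl2]
          ext z
          simp only [Finset.mem_union, Finset.mem_sdiff, Finset.mem_symmDiff]
          have h1 : z ∈ u → z ∈ T := @hT1 z
          have h2 : z ∈ T → z ∈ u ∨ z ∈ v := fun h =>
            (Finset.mem_union.mp (hT2 h)).imp id (fun hs => (Finset.mem_sdiff.mp (hS hs)).1)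
          tauto
        · intro t ht htne htl
          rcases prefix_append_cases _ _ _ ht with h | ⟨t₂, rfl, ht₂⟩
          · -- ascent within T \ u
            have htsub : t.toFinset ⊆ T \ u := by
              intro z hz
              rw [List.mem_toFinset] at hz
              have := h.sublist.subset hz
              rwa [Finset.mem_toList] at this
            have htnd : t.Nodup := h.sublist.nodup (Finset.nodup_toList _)
            have htc : t.toFinset.card = t.length := List.toFinset_card_of_nodup htnd
            have htlen_le : t.length ≤ d := by
              have := Finset.card_le_card htsub
              rw [htc, hTucard] at this
              exact this
            have hdisj2 : Disjoint u t.toFinset := by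
              rw [Finset.disjoint_right]
              intro z hz
              exact (Finset.mem_sdiff.mp (htsub hz)).2
            have hveq : symmDiff u t.toFinset = u ∪ t.toFinset := by
              rw [hdisj2.symmDiff_eq_sup, Finset.sup_eq_union]
            rcases eq_or_lt_of_le htlen_le with heq | hlt
            · have heq2 : t.toFinset = T \ u := by
                refine Finset.eq_of_subset_of_card_le htsub ?_
                rw [htc, heq, hTucard]
              have hveq2 : symmDiff u t.toFinset = T := by
                rw [heq2]
                have hd2 : Disjoint u (T \ u) := Finset.disjoint_sdiff
                rw [hd2.symmDiff_eq_sup, Finset.sup_eq_union, Finset.union_sdiff_of_subset hT1]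
              rw [hveq2]
              exact hTnotM
            · apply notM_card
              have h1 : 1 ≤ t.length := by
                cases t with
                | nil => exact absurd rfl htne
                | cons _ _ => simp
              have hvcard : (symmDiff u t.toFinset).card = u.card + t.length := by
                rw [hveq, Finset.card_union_of_disjoint hdisj2, htc]
              have hwz : ((symmDiff u t.toFinset).card : ℤ) = (u.card : ℤ) + (t.length : ℤ) := by
                rw [hvcard]; push_cast; ring
              rw [hwz]
              exact mod_helper hdpos hm (by omega) (by omega)
          · -- past the chosen level T
            have htf2 : t₂.toFinset ⊆ symmDiff T v := by
              rw [← hl2]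
              intro z hz
              rw [List.mem_toFinset] at hz ⊢
              exact ht₂.sublist.subset hz
            have hd1 : Disjoint (T \ u) t₂.toFinset := by
              rw [Finset.disjoint_left]
              intro z hz hz2
              exact hdisj z hz (htf2 hz2)
            have hvx : symmDiff u (((T \ u).toList ++ t₂).toFinset) = symmDiff T t₂.toFinset := by
              rw [List.toFinset_append, Finset.toList_toFinset]
              have e1 : (T \ u) ∪ t₂.toFinset = symmDiff (T \ u) t₂.toFinset := by
                rw [hd1.symmDiff_eq_sup, Finset.sup_eq_union]
              rw [e1, ← symmDiff_assoc]
              have e2 : symmDiff u (T \ u) = T := by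
                have hd2 : Disjoint u (T \ u) := Finset.disjoint_sdiff
                rw [hd2.symmDiff_eq_sup, Finset.sup_eq_union, Finset.union_sdiff_of_subset hT1]
              rw [e2]
            rw [hvx]
            by_cases ht2ne : t₂ = []
            · subst ht2ne
              rw [List.toFinset_nil, show (∅ : Finset (Fin n)) = ⊥ from rfl, symmDiff_bot]
              exact hTnotM
            · exact hl3 t₂ ht₂ ht2ne (fun h => htl (by rw [h]))
  -- one-sided visibility
  have visible : ∀ u v : Finset (Fin n), u ∈ M → v ∈ M → u.card ≤ v.card →
      IsVisiblePair (hypercube n) M u v := by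
    intro u v hu hv hle
    have hum := (hMcard u hu).1
    have hvm := (hMcard v hv).1
    obtain ⟨k, hk⟩ : ∃ k : ℕ, v.card = u.card + k * d := by
      have hdvd : (d : ℤ) ∣ ((v.card : ℤ) - (u.card : ℤ)) :=
        Int.dvd_of_emod_eq_zero (Int.emod_eq_emod_iff_emod_sub_eq_zero.mp (hvm.trans hum.symm))
      have hdvd' : d ∣ (v.card - u.card) := by
        have : (d : ℤ) ∣ (((v.card - u.card : ℕ) : ℤ)) := by
          rwa [Nat.cast_sub hle]
        exact_mod_cast this
      obtain ⟨k, hk'⟩ := hdvd'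
      refine ⟨k, ?_⟩
      have h2 := Nat.sub_add_cancel hle
      rw [hk'] at h2
      rw [← h2]
      ring
    obtain ⟨l, hl1, hl2, hl3⟩ := core k u v hk hum
    have hXorL : XorL u l = v := by
      rw [XorL_eq u l hl1, hl2, symmDiff_symmDiff_cancel_left]
    refine ⟨(flipWalk u l).copy rfl hXorL, ?_, ?_, ?_⟩
    · rw [SimpleGraph.Walk.isPath_copy]
      exact flipWalk_isPath u l hl1
    · rw [SimpleGraph.Walk.length_copy, flipWalk_length]
      have hlc : l.length = (symmDiff u v).card := by
        rw [← hl2]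
        exact (List.toFinset_card_of_nodup hl1).symm
      have hd1 : (hypercube n).dist u v ≤ l.length := by
        have := SimpleGraph.dist_le ((flipWalk u l).copy rfl hXorL)
        rwa [SimpleGraph.Walk.length_copy, flipWalk_length] at this
      have hd2 : (symmDiff u v).card ≤ (hypercube n).dist u v := by
        obtain ⟨p, hp⟩ := SimpleGraph.Reachable.exists_walk_length_eq_dist
          ⟨(flipWalk u l).copy rfl hXorL⟩
        rw [← hp]
        exact card_symmDiff_le_length p
      omega
    · intro x hx hxM
      rw [SimpleGraph.Walk.support_copy] at hx
      obtain ⟨t, htp, rfl⟩ := flipWalk_support u l x hx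
      have htnd : t.Nodup := htp.sublist.nodup hl1
      rw [XorL_eq u t htnd] at hxM ⊢
      by_cases h1 : t = []
      · subst h1
        left
        rw [List.toFinset_nil, show (∅ : Finset (Fin n)) = ⊥ from rfl, symmDiff_bot]
      · by_cases h2 : t = l
        · subst h2
          right
          rw [hl2, symmDiff_symmDiff_cancel_left]
        · exact absurd hxM (hl3 t htp h1 h2)
  intro u hu v hv
  rcases le_total u.card v.card with h | h
  · exact visible u v hu hv h
  · obtain ⟨p, h1, h2, h3⟩ := visible v u hv hu h
    refine ⟨p.reverse, h1.reverse, ?_, ?_⟩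
    · rw [SimpleGraph.Walk.length_reverse, h2, SimpleGraph.dist_comm]
    · intro x hx hm
      rw [SimpleGraph.Walk.support_reverse, List.mem_reverse] at hx
      exact (h3 x hx hm).symm
end

section
/- Let n ∈ ℕ and r, r' ∈ {0,…,n} with r + 3 ≤ r'. For any two distinct vertices A, B ∈ L_r ∪ L_{r'}, there exists a shortest A,B-path in Q_n whose internal vertices all lie in layers L_j with r < j < r' (in particular, the path is internally disjoint from L_r ∪ L_{r'}). -/
namespace HCAux
variable {n : ℕ}




/-- One hypercube step: toggle element `x`. -/
def hstep (X : Finset (Fin n)) (x : Fin n) : Finset (Fin n) := symmDiff X {x}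

lemma hstep_of_mem {X : Finset (Fin n)} {x : Fin n} (h : x ∈ X) :
    hstep X x = X.erase x := by
  ext a
  by_cases hax : a = x <;> simp [hstep, Finset.mem_symmDiff, hax, h]

lemma hstep_of_not_mem {X : Finset (Fin n)} {x : Fin n} (h : x ∉ X) :
    hstep X x = insert x X := by
  ext a
  by_cases hax : a = x <;> simp [hstep, Finset.mem_symmDiff, hax, h]

lemma card_hstep_of_mem {X : Finset (Fin n)} {x : Fin n} (h : x ∈ X) :
    (hstep X x).card = X.card - 1 := by
  rw [hstep_of_mem h, Finset.card_erase_of_mem h]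

lemma card_hstep_of_not_mem {X : Finset (Fin n)} {x : Fin n} (h : x ∉ X) :
    (hstep X x).card = X.card + 1 := by
  rw [hstep_of_not_mem h, Finset.card_insert_of_notMem h]

lemma hstep_adj (X : Finset (Fin n)) (x : Fin n) : (hypercube n).Adj X (hstep X x) := by
  show (symmDiff X (symmDiff X {x})).card = 1
  rw [symmDiff_symmDiff_cancel_left]
  simp

/-- The walk obtained by toggling the elements of `l` in order. -/
def walkOfList : (l : List (Fin n)) → (X : Finset (Fin n)) →
    (hypercube n).Walk X (l.foldl hstep X)
  | [], _ => SimpleGraph.Walk.nil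
  | x :: l, X => SimpleGraph.Walk.cons (hstep_adj X x) (walkOfList l (hstep X x))

lemma length_walkOfList : ∀ (l : List (Fin n)) (X), (walkOfList l X).length = l.length
  | [], _ => rfl
  | x :: l, X => by simp [walkOfList, length_walkOfList l (hstep X x)]

lemma support_walkOfList : ∀ (l : List (Fin n)) (X),
    (walkOfList l X).support = List.scanl hstep X l
  | [], _ => rfl
  | x :: l, X => by
    simp [walkOfList, support_walkOfList l (hstep X x), List.scanl_cons]

lemma foldl_hstep_eq : ∀ (l : List (Fin n)), l.Nodup → ∀ X,
    l.foldl hstep X = symmDiff X l.toFinset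
  | [], _, X => by simp [← Finset.bot_eq_empty]
  | x :: l, h, X => by
    have hx : x ∉ l := (List.nodup_cons.mp h).1
    have hd : Disjoint ({x} : Finset (Fin n)) l.toFinset := by
      simp [Finset.disjoint_singleton_left, hx]
    rw [List.foldl_cons, foldl_hstep_eq l (List.nodup_cons.mp h).2, hstep,
      symmDiff_assoc, List.toFinset_cons, hd.symmDiff_eq_sup, Finset.insert_eq]
    rfl


/-- Interleave two lists: `alt [a,b] [x,y,z] = [a,x,b,y,z]`. -/
def alt {α : Type*} : List α → List α → List α
  | [], ys => ys
  | x :: xs, [] => x :: xs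
  | x :: xs, y :: ys => x :: y :: alt xs ys

lemma alt_perm {α : Type*} : ∀ (xs ys : List α), (alt xs ys).Perm (xs ++ ys)
  | [], ys => by simp [alt]
  | x :: xs, [] => by simp [alt]
  | x :: xs, y :: ys =>
    (((alt_perm xs ys).cons y).cons x).trans (List.perm_middle.symm.cons x)


/-- Pure climbing: all intermediate sets stay between `X.card` and `X.card + u.length`,
with the top reached only at the very end. -/
lemma zup : ∀ (u : List (Fin n)) (X : Finset (Fin n)), u.Nodup → (∀ x ∈ u, x ∉ X) →
    ∀ y ∈ List.scanl hstep X u,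
      X.card ≤ y.card ∧ (y.card < X.card + u.length ∨ y = u.foldl hstep X)
  | [], X, _, _ => by
    intro y hy
    simp only [List.scanl_nil, List.mem_singleton] at hy
    subst hy
    exact ⟨le_rfl, Or.inr rfl⟩
  | x :: u, X, hnd, hmem => by
    intro y hy
    have hx : x ∉ X := hmem x (by simp)
    have hcard : (hstep X x).card = X.card + 1 := card_hstep_of_not_mem hx
    rw [List.scanl_cons] at hy
    simp only [List.singleton_append, List.mem_cons] at hy
    rcases hy with hy | hy
    · subst hy
      exact ⟨le_rfl, Or.inl (by simp)⟩
    · have h2 : ∀ z ∈ u, z ∉ hstep X x := by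
        intro z hz
        rw [hstep_of_not_mem hx]
        simp only [Finset.mem_insert, not_or]
        exact ⟨fun h => (List.nodup_cons.mp hnd).1 (h ▸ hz), hmem z (by simp [hz])⟩
      obtain ⟨h3, h4⟩ := zup u (hstep X x) (List.nodup_cons.mp hnd).2 h2 y hy
      refine ⟨by omega, ?_⟩
      rcases h4 with h4 | h4
      · exact Or.inl (by simp; omega)
      · exact Or.inr h4

/-- Zig-zag with strictly more ups than downs: cards stay in
`[X.card - 1, X.card + (u.length - d.length))`, top reached only at the end. -/
lemma z2 : ∀ (d u : List (Fin n)) (X : Finset (Fin n)),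
    d.length < u.length → d.Nodup → u.Nodup →
    (∀ x ∈ d, x ∈ X) → (∀ x ∈ u, x ∉ X) → (∀ x ∈ d, x ∉ u) →
    ∀ y ∈ List.scanl hstep X (alt d u),
      X.card - 1 ≤ y.card ∧
        (y.card < X.card + (u.length - d.length) ∨ y = (alt d u).foldl hstep X)
  | [], u, X, hlen, _, hu, _, hmu, _ => by
    intro y hy
    obtain ⟨h1, h2⟩ := zup u X hu hmu y (by simpa [alt] using hy)
    exact ⟨by omega, by simpa [alt] using h2⟩
  | x :: xs, [], X, hlen, _, _, _, _, _ => by simp at hlen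
  | x :: xs, y0 :: ys, X, hlen, hd, hu, hmd, hmu, hdu => by
    intro y hy
    have hx : x ∈ X := hmd x (by simp)
    have hXpos : 1 ≤ X.card := Finset.card_pos.mpr ⟨x, hx⟩
    have hy0 : y0 ∉ hstep X x := by
      rw [hstep_of_mem hx]
      intro h
      exact hmu y0 (by simp) (Finset.mem_of_mem_erase h)
    have hc1 : (hstep X x).card = X.card - 1 := card_hstep_of_mem hx
    have hc2 : (hstep (hstep X x) y0).card = X.card := by
      rw [card_hstep_of_not_mem hy0, hc1]; omega
    have halt : alt (x :: xs) (y0 :: ys) = x :: y0 :: alt xs ys := rfl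
    rw [halt, List.scanl_cons, List.scanl_cons] at hy
    simp only [List.singleton_append, List.mem_cons] at hy
    rcases hy with hy | hy | hy
    · subst hy; exact ⟨by omega, Or.inl (by omega)⟩
    · subst hy; rw [hc1]; exact ⟨le_rfl, Or.inl (by omega)⟩
    · set X' := hstep (hstep X x) y0 with hX'
      have hX'eq : X' = insert y0 ((X.erase x)) := by
        rw [hX', hstep_of_not_mem hy0, hstep_of_mem hx]
      have hmd' : ∀ z ∈ xs, z ∈ X' := by
        intro z hz
        rw [hX'eq]
        exact Finset.mem_insert_of_mem (Finset.mem_erase.mpr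
          ⟨fun h => (List.nodup_cons.mp hd).1 (h ▸ hz), hmd z (by simp [hz])⟩)
      have hmu' : ∀ z ∈ ys, z ∉ X' := by
        intro z hz
        rw [hX'eq]
        simp only [Finset.mem_insert, not_or]
        exact ⟨fun h => (List.nodup_cons.mp hu).1 (h ▸ hz),
          fun h => hmu z (by simp [hz]) (Finset.mem_of_mem_erase h)⟩
      have hdu' : ∀ z ∈ xs, z ∉ ys := fun z hz h =>
        hdu z (by simp [hz]) (by simp [h])
      obtain ⟨h1, h2⟩ := z2 xs ys X' (by simpa using hlen) (List.nodup_cons.mp hd).2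
        (List.nodup_cons.mp hu).2 hmd' hmu' hdu' y hy
      rw [hc2] at h1 h2
      refine ⟨h1, ?_⟩
      rcases h2 with h2 | h2
      · exact Or.inl (by simp only [List.length_cons]; omega)
      · exact Or.inr (by rw [halt, List.foldl_cons, List.foldl_cons]; exact h2)

/-- Zig-zag with `u.length ≤ d.length ≤ u.length + 2` (ending with downs):
cards never exceed `X.card`, and drop below `X.card - 1` only at the very end. -/
lemma z1 : ∀ (d u : List (Fin n)) (X : Finset (Fin n)),
    u.length ≤ d.length → d.length ≤ u.length + 2 → d.Nodup → u.Nodup →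
    (∀ x ∈ d, x ∈ X) → (∀ x ∈ u, x ∉ X) → (∀ x ∈ d, x ∉ u) →
    ∀ y ∈ List.scanl hstep X (alt d u),
      y.card ≤ X.card ∧ (X.card - 1 ≤ y.card ∨ y = (alt d u).foldl hstep X)
  | [], u, X, hlen, _, _, _, _, _, _ => by
    intro y hy
    have hu : u = [] := List.length_eq_zero_iff.mp (by
      simp only [List.length_nil] at hlen; omega)
    subst hu
    simp only [alt, List.scanl_nil, List.mem_singleton] at hy
    subst hy
    exact ⟨le_rfl, Or.inl (by omega)⟩
  | x :: xs, [], X, hlen, hlen2, hd, _, hmd, _, _ => by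
    intro y hy
    have hx : x ∈ X := hmd x (by simp)
    have hc1 : (hstep X x).card = X.card - 1 := card_hstep_of_mem hx
    rcases xs with _ | ⟨x2, xs2⟩
    · simp only [alt, List.scanl_cons, List.scanl_nil, List.singleton_append,
        List.mem_cons, List.mem_singleton, List.mem_nil_iff, or_false] at hy
      rcases hy with hy | hy
      · subst hy; exact ⟨le_rfl, Or.inl (by omega)⟩
      · subst hy
        exact ⟨by omega, Or.inl (by omega)⟩
    · have hxs2 : xs2 = [] := by
        simp only [List.length_cons, List.length_nil] at hlen2
        exact List.length_eq_zero_iff.mp (by omega)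
      subst hxs2
      have hx2 : x2 ∈ hstep X x := by
        rw [hstep_of_mem hx]
        exact Finset.mem_erase.mpr ⟨fun h => (by simp [h] at hd),
          hmd x2 (by simp)⟩
      have hc2 : (hstep (hstep X x) x2).card = X.card - 2 := by
        rw [card_hstep_of_mem hx2, hc1]; omega
      simp only [alt, List.scanl_cons, List.scanl_nil, List.singleton_append,
        List.mem_cons, List.mem_singleton, List.mem_nil_iff, or_false] at hy
      rcases hy with hy | hy | hy
      · subst hy; exact ⟨le_rfl, Or.inl (by omega)⟩
      · subst hy; exact ⟨by omega, Or.inl (by omega)⟩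
      · subst hy
        exact ⟨by omega, Or.inr rfl⟩
  | x :: xs, y0 :: ys, X, hlen, hlen2, hd, hu, hmd, hmu, hdu => by
    intro y hy
    have hx : x ∈ X := hmd x (by simp)
    have hXpos : 1 ≤ X.card := Finset.card_pos.mpr ⟨x, hx⟩
    have hy0 : y0 ∉ hstep X x := by
      rw [hstep_of_mem hx]
      intro h
      exact hmu y0 (by simp) (Finset.mem_of_mem_erase h)
    have hc1 : (hstep X x).card = X.card - 1 := card_hstep_of_mem hx
    have hc2 : (hstep (hstep X x) y0).card = X.card := by
      rw [card_hstep_of_not_mem hy0, hc1]; omega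
    have halt : alt (x :: xs) (y0 :: ys) = x :: y0 :: alt xs ys := rfl
    rw [halt, List.scanl_cons, List.scanl_cons] at hy
    simp only [List.singleton_append, List.mem_cons] at hy
    rcases hy with hy | hy | hy
    · subst hy; exact ⟨le_rfl, Or.inl (by omega)⟩
    · subst hy; rw [hc1]; exact ⟨by omega, Or.inl le_rfl⟩
    · set X' := hstep (hstep X x) y0 with hX'
      have hX'eq : X' = insert y0 ((X.erase x)) := by
        rw [hX', hstep_of_not_mem hy0, hstep_of_mem hx]
      have hmd' : ∀ z ∈ xs, z ∈ X' := by
        intro z hz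
        rw [hX'eq]
        exact Finset.mem_insert_of_mem (Finset.mem_erase.mpr
          ⟨fun h => (List.nodup_cons.mp hd).1 (h ▸ hz), hmd z (by simp [hz])⟩)
      have hmu' : ∀ z ∈ ys, z ∉ X' := by
        intro z hz
        rw [hX'eq]
        simp only [Finset.mem_insert, not_or]
        exact ⟨fun h => (List.nodup_cons.mp hu).1 (h ▸ hz),
          fun h => hmu z (by simp [hz]) (Finset.mem_of_mem_erase h)⟩
      have hdu' : ∀ z ∈ xs, z ∉ ys := fun z hz h =>
        hdu z (by simp [hz]) (by simp [h])
      obtain ⟨h1, h2⟩ := z1 xs ys X' (by simpa using hlen) (by simpa using hlen2)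
        (List.nodup_cons.mp hd).2 (List.nodup_cons.mp hu).2 hmd' hmu' hdu' y hy
      rw [hc2] at h1 h2
      refine ⟨h1, ?_⟩
      rcases h2 with h2 | h2
      · exact Or.inl h2
      · exact Or.inr (by rw [halt, List.foldl_cons, List.foldl_cons]; exact h2)

lemma card_symmDiff (A B : Finset (Fin n)) :
    (symmDiff A B).card = (A \ B).card + (B \ A).card := by
  rw [symmDiff_def]
  exact Finset.card_union_of_disjoint disjoint_sdiff_sdiff

lemma card_sdiff_arith (A B : Finset (Fin n)) :
    (A \ B).card + B.card = (B \ A).card + A.card := by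
  rw [Finset.card_sdiff_add_card, Finset.card_sdiff_add_card, Finset.union_comm]

/-- Main construction: `|A| = r`, `|B| ∈ {r, r'}`, and `|B \ A| ≥ 2`. -/
lemma cmain (r r' : ℕ) (hrr' : r + 3 ≤ r') (A B : Finset (Fin n))
    (hA : A.card = r) (hB : B.card = r ∨ B.card = r') (hm : 2 ≤ (B \ A).card) :
    ∃ w : (hypercube n).Walk A B, w.length = (symmDiff A B).card ∧
      ∀ x ∈ w.support, x ≠ A → x ≠ B → r < x.card ∧ x.card < r' := by
  classical
  set d : List (Fin n) := (A \ B).toList with hddef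
  have hdnodup : d.Nodup := Finset.nodup_toList _
  have hdlen : d.length = (A \ B).card := Finset.length_toList _
  have hdmem : ∀ z ∈ d, z ∈ A \ B := fun z hz => Finset.mem_toList.mp hz
  obtain ⟨u0, u1, rest, hu⟩ : ∃ u0 u1 rest, (B \ A).toList = u0 :: u1 :: rest := by
    rcases h : (B \ A).toList with _ | ⟨u0, _ | ⟨u1, rest⟩⟩
    · exfalso; have := Finset.length_toList (B \ A); rw [h] at this; simp at this; omega
    · exfalso; have := Finset.length_toList (B \ A); rw [h] at this; simp at this; omega
    · exact ⟨u0, u1, rest, rfl⟩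
  have hunodup : (u0 :: u1 :: rest).Nodup := hu ▸ Finset.nodup_toList _
  have humem : ∀ z ∈ u0 :: u1 :: rest, z ∈ B \ A := fun z hz =>
    Finset.mem_toList.mp (hu ▸ hz)
  have hulen : rest.length + 2 = (B \ A).card := by
    have := Finset.length_toList (B \ A); rw [hu] at this
    simp only [List.length_cons] at this; omega
  set l : List (Fin n) := u0 :: u1 :: alt d rest with hldef
  have hperm : l.Perm (d ++ (u0 :: u1 :: rest)) :=
    (((alt_perm d rest).cons u1).cons u0).trans
      ((List.perm_middle.symm.cons u0).trans List.perm_middle.symm)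
  have hdu : ∀ z ∈ d, z ∉ (u0 :: u1 :: rest) := by
    intro z hz hzu
    have h1 := hdmem z hz
    have h2 := humem z hzu
    simp only [Finset.mem_sdiff] at h1 h2
    exact h2.2 h1.1
  have hlnodup : l.Nodup := hperm.nodup_iff.mpr (by
    rw [List.nodup_append]
    exact ⟨hdnodup, hunodup, fun z hz b hb h => by subst h; exact hdu z hz hb⟩)
  have hltoF : l.toFinset = symmDiff A B := by
    rw [List.toFinset_eq_of_perm _ _ hperm, List.toFinset_append, hddef,
      Finset.toList_toFinset, ← hu, Finset.toList_toFinset, symmDiff_def,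
      Finset.sup_eq_union]
  have hfold : l.foldl hstep A = B := by
    rw [foldl_hstep_eq l hlnodup, hltoF, symmDiff_symmDiff_cancel_left]
  have hllen : l.length = (symmDiff A B).card := by
    rw [hperm.length_eq, List.length_append, card_symmDiff, hdlen]
    simp only [List.length_cons]
    omega
  refine ⟨(walkOfList l A).copy rfl hfold, ?_, ?_⟩
  · rw [SimpleGraph.Walk.length_copy, length_walkOfList, hllen]
  · intro x hx hxA hxB
    rw [SimpleGraph.Walk.support_copy, support_walkOfList] at hx
    have hu0 : u0 ∈ B \ A := humem u0 (by simp)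
    have hu1 : u1 ∈ B \ A := humem u1 (by simp)
    have hu0A : u0 ∉ A := (Finset.mem_sdiff.mp hu0).2
    have hX1 : hstep A u0 = insert u0 A := hstep_of_not_mem hu0A
    have hu1X1 : u1 ∉ hstep A u0 := by
      rw [hX1]
      simp only [Finset.mem_insert, not_or]
      exact ⟨fun h => (List.nodup_cons.mp hunodup).1 (by simp [h]),
        (Finset.mem_sdiff.mp hu1).2⟩
    have hcX1 : (hstep A u0).card = r + 1 := by
      rw [card_hstep_of_not_mem hu0A, hA]
    set X2 := hstep (hstep A u0) u1 with hX2def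
    have hcX2 : X2.card = r + 2 := by
      rw [hX2def, card_hstep_of_not_mem hu1X1, hcX1]
    have hX2eq : X2 = insert u1 (insert u0 A) := by
      rw [hX2def, hstep_of_not_mem hu1X1, hX1]
    rw [hldef, List.scanl_cons, List.scanl_cons] at hx
    simp only [List.singleton_append, List.mem_cons] at hx
    -- common hypotheses for the zig-zag lemmas
    have hmd' : ∀ z ∈ d, z ∈ X2 := by
      intro z hz
      rw [hX2eq]
      exact Finset.mem_insert_of_mem (Finset.mem_insert_of_mem
        (Finset.mem_sdiff.mp (hdmem z hz)).1)
    have hmu' : ∀ z ∈ rest, z ∉ X2 := by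
      intro z hz
      rw [hX2eq]
      simp only [Finset.mem_insert, not_or]
      have hzu : z ∈ B \ A := humem z (by simp [hz])
      refine ⟨fun h => ?_, fun h => ?_, (Finset.mem_sdiff.mp hzu).2⟩
      · exact (List.nodup_cons.mp (List.nodup_cons.mp hunodup).2).1 (h ▸ hz)
      · exact (List.nodup_cons.mp hunodup).1 (by simp [h ▸ hz])
    have hdu' : ∀ z ∈ d, z ∉ rest := fun z hz h => hdu z hz (by simp [h])
    have hrestnd : rest.Nodup := (List.nodup_cons.mp (List.nodup_cons.mp hunodup).2).2
    have hfold2 : (alt d rest).foldl hstep X2 = B := hfold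
    rcases hx with hx | hx | hx
    · exact absurd hx hxA
    · subst hx
      rw [hcX1]
      omega
    · have hcards := card_sdiff_arith A B
      rcases hB with hB | hB
      · -- B at level r : use z1
        obtain ⟨h1, h2⟩ := z1 d rest X2 (by omega) (by omega) hdnodup hrestnd
          hmd' hmu' hdu' x hx
        rw [hcX2] at h1 h2
        rcases h2 with h2 | h2
        · omega
        · exact absurd (h2.trans hfold2) hxB
      · -- B at level r' : use z2
        obtain ⟨h1, h2⟩ := z2 d rest X2 (by omega) hdnodup hrestnd
          hmd' hmu' hdu' x hx
        rw [hcX2] at h1 h2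
        rcases h2 with h2 | h2
        · constructor
          · omega
          · have : r + 2 + (rest.length - d.length) = r' := by omega
            omega
        · exact absurd (h2.trans hfold2) hxB

/-- Same-layer case. -/
lemma csame (r r' : ℕ) (hrr' : r + 3 ≤ r') (A B : Finset (Fin n))
    (hA : A.card = r) (hB : B.card = r) (hne : A ≠ B) :
    ∃ w : (hypercube n).Walk A B, w.length = (symmDiff A B).card ∧
      ∀ x ∈ w.support, x ≠ A → x ≠ B → r < x.card ∧ x.card < r' := by
  classical
  have hcards := card_sdiff_arith A B
  have hkpos : (A \ B).card ≠ 0 := by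
    intro h
    apply hne
    have hsub : A ⊆ B := by
      rw [← Finset.sdiff_eq_empty_iff_subset]
      exact Finset.card_eq_zero.mp h
    exact Finset.eq_of_subset_of_card_le hsub (by omega)
  by_cases h2 : 2 ≤ (B \ A).card
  · exact cmain r r' hrr' A B hA (Or.inl hB) h2
  · have hk : (A \ B).card = 1 := by omega
    have hm : (B \ A).card = 1 := by omega
    obtain ⟨a0, ha0⟩ := Finset.card_eq_one.mp hk
    obtain ⟨b0, hb0⟩ := Finset.card_eq_one.mp hm
    have ha0m : a0 ∈ A \ B := by rw [ha0]; exact Finset.mem_singleton_self a0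
    have hb0m : b0 ∈ B \ A := by rw [hb0]; exact Finset.mem_singleton_self b0
    have hne' : b0 ≠ a0 := by
      intro h
      subst h
      exact (Finset.mem_sdiff.mp hb0m).2 (Finset.mem_sdiff.mp ha0m).1
    set l : List (Fin n) := [b0, a0] with hldef
    have hlnodup : l.Nodup := by simp [hldef, hne']
    have hltoF : l.toFinset = symmDiff A B := by
      rw [symmDiff_def, Finset.sup_eq_union, ha0, hb0]
      ext z
      simp [hldef, or_comm]
    have hfold : l.foldl hstep A = B := by
      rw [foldl_hstep_eq l hlnodup, hltoF, symmDiff_symmDiff_cancel_left]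
    refine ⟨(walkOfList l A).copy rfl hfold, ?_, ?_⟩
    · rw [SimpleGraph.Walk.length_copy, length_walkOfList, card_symmDiff, hk, hm]
      rfl
    · intro x hx hxA hxB
      rw [SimpleGraph.Walk.support_copy, support_walkOfList] at hx
      have hb0A : b0 ∉ A := (Finset.mem_sdiff.mp hb0m).2
      simp only [hldef, List.scanl_cons, List.scanl_nil, List.singleton_append,
        List.mem_cons, List.mem_singleton, List.mem_nil_iff, or_false] at hx
      rcases hx with hx | hx | hx
      · exact absurd hx hxA
      · subst hx
        rw [card_hstep_of_not_mem hb0A, hA]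
        omega
      · exact absurd (hx.trans hfold) hxB

/-- Complementation as a hypercube automorphism. -/
def complHom (n : ℕ) : hypercube n →g hypercube n where
  toFun X := Xᶜ
  map_rel' := by
    intro a b h
    show (symmDiff aᶜ bᶜ).card = 1
    rwa [compl_symmDiff_compl]

lemma exists_good_walk (r r' : ℕ) (hrr' : r + 3 ≤ r') (hn : r' ≤ n)
    (A B : Finset (Fin n)) (hAB : A ≠ B)
    (hA : A.card = r ∨ A.card = r') (hB : B.card = r ∨ B.card = r') :
    ∃ w : (hypercube n).Walk A B, w.length = (symmDiff A B).card ∧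
      ∀ x ∈ w.support, x ≠ A → x ≠ B → r < x.card ∧ x.card < r' := by
  classical
  have hcards := card_sdiff_arith A B
  rcases hA with hA | hA <;> rcases hB with hB | hB
  · exact csame r r' hrr' A B hA hB hAB
  · exact cmain r r' hrr' A B hA (Or.inr hB) (by omega)
  · obtain ⟨w, h1, h2⟩ := cmain r r' hrr' B A hB (Or.inr hA) (by omega)
    refine ⟨w.reverse, ?_, ?_⟩
    · rw [SimpleGraph.Walk.length_reverse, h1, symmDiff_comm]
    · intro x hx hxA hxB
      rw [SimpleGraph.Walk.support_reverse, List.mem_reverse] at hx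
      exact h2 x hx hxB hxA
  · have hAc : Aᶜ.card = n - r' := by rw [Finset.card_compl, hA]; simp
    have hBc : Bᶜ.card = n - r' := by rw [Finset.card_compl, hB]; simp
    obtain ⟨w, h1, h2⟩ := csame (n - r') (n - r) (by omega) Aᶜ Bᶜ hAc hBc
      (fun h => hAB (by simpa using congrArg compl h))
    refine ⟨((w.map (complHom n)).copy (show complHom n Aᶜ = A from compl_compl A) (show complHom n Bᶜ = B from compl_compl B)), ?_, ?_⟩
    · rw [SimpleGraph.Walk.length_copy, SimpleGraph.Walk.length_map, h1,
        compl_symmDiff_compl]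
    · intro x hx hxA hxB
      rw [SimpleGraph.Walk.support_copy, SimpleGraph.Walk.support_map] at hx
      obtain ⟨y, hy, hxy⟩ := List.mem_map.mp hx
      have hyA : y ≠ Aᶜ := fun h => hxA (by rw [← hxy, h]; exact compl_compl A)
      have hyB : y ≠ Bᶜ := fun h => hxB (by rw [← hxy, h]; exact compl_compl B)
      obtain ⟨hl, hr⟩ := h2 y hy hyA hyB
      have hycard : y.card ≤ n := by simpa using Finset.card_le_univ y
      have hx2 : x.card = n - y.card := by
        rw [← hxy]
        show (yᶜ).card = n - y.card
        rw [Finset.card_compl]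
        simp
      omega

lemma card_symmDiff_le_length : ∀ {A B : Finset (Fin n)} (w : (hypercube n).Walk A B),
    (symmDiff A B).card ≤ w.length := by
  intro A B w
  induction w with
  | nil => simp [symmDiff_self, ← Finset.bot_eq_empty]
  | @cons A C B h q ih =>
    have hc : (symmDiff A C).card = 1 := h
    have htri : symmDiff A B ⊆ symmDiff A C ∪ symmDiff C B := by
      simpa [Finset.sup_eq_union] using symmDiff_triangle A C B
    calc (symmDiff A B).card ≤ (symmDiff A C ∪ symmDiff C B).card :=
          Finset.card_le_card htri
      _ ≤ (symmDiff A C).card + (symmDiff C B).card := Finset.card_union_le _ _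
      _ ≤ 1 + q.length := by rw [hc]; omega
      _ = (SimpleGraph.Walk.cons h q).length := by
          rw [SimpleGraph.Walk.length_cons]; omega

end HCAux


/-- **Claim 1.** Let `r + 3 ≤ r' ≤ n`. For any two distinct vertices `A, B ∈ L_r ∪ L_{r'}`,
there is a shortest `A,B`-path in `Q_n` all of whose internal vertices lie in layers
strictly between `L_r` and `L_{r'}`. -/
theorem exists_shortestPath_between_layers (n r r' : ℕ) (hrr' : r + 3 ≤ r') (hn : r' ≤ n)
    (A B : Finset (Fin n)) (hAB : A ≠ B)
    (hA : A.card = r ∨ A.card = r') (hB : B.card = r ∨ B.card = r') :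
    ∃ p : (hypercube n).Walk A B, p.IsPath ∧ p.length = (hypercube n).dist A B ∧
      ∀ x ∈ p.support, x ≠ A → x ≠ B → r < x.card ∧ x.card < r' := by
  obtain ⟨w, hwlen, hwsupp⟩ := HCAux.exists_good_walk r r' hrr' hn A B hAB hA hB
  have hdist : (hypercube n).dist A B = (symmDiff A B).card := by
    refine le_antisymm (hwlen ▸ SimpleGraph.dist_le w) ?_
    obtain ⟨p, hp⟩ := SimpleGraph.Reachable.exists_walk_length_eq_dist ⟨w⟩
    calc (symmDiff A B).card ≤ p.length := HCAux.card_symmDiff_le_length p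
      _ = _ := hp
  refine ⟨w.bypass, SimpleGraph.Walk.bypass_isPath w, ?_, ?_⟩
  · refine le_antisymm ?_ (SimpleGraph.dist_le w.bypass)
    calc w.bypass.length ≤ w.length := SimpleGraph.Walk.length_bypass_le w
      _ = (hypercube n).dist A B := by rw [hwlen, hdist]
  · intro x hx
    exact hwsupp x (SimpleGraph.Walk.support_bypass_subset w hx)
end

section
/- Let r, s, t be positive integers with min{r,s} ≥ t. Then for all n ≥ r, ex(n+1, D_{r+1}(s,t)) / C(n+1,r+1) ≤ ex(n, D_r(s,t)) / C(n,r); equivalently, (r+1)·ex(n+1, D_{r+1}(s,t)) ≤ (n+1)·ex(n, D_r(s,t)). -/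
lemma not_containsDaisy_empty {n r s t : ℕ} (htr : t ≤ r) (hts : t ≤ s) :
    ¬ ContainsDaisy n r s t (∅ : Finset (Finset (Fin n))) := by
  rintro ⟨A, B, hAB, hA, hB, hall⟩
  obtain ⟨T, hAT, hTB, hT⟩ := Finset.exists_subsuperset_card_eq hAB
    (show A.card ≤ r by omega) (show r ≤ B.card by omega)
  exact absurd (hall T hAT hTB hT) (Finset.notMem_empty T)

lemma daisyTuran_bddAbove (n r s t : ℕ) :
    BddAbove {k | ∃ F : Finset (Finset (Fin n)), (∀ T ∈ F, T.card = r) ∧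
      ¬ ContainsDaisy n r s t F ∧ F.card = k} := by
  refine ⟨Fintype.card (Finset (Fin n)), ?_⟩
  rintro k ⟨F, -, -, rfl⟩
  exact Finset.card_le_univ F

lemma daisyTuran_spec {n r s t : ℕ} (htr : t ≤ r) (hts : t ≤ s) :
    ∃ F : Finset (Finset (Fin n)), (∀ T ∈ F, T.card = r) ∧
      ¬ ContainsDaisy n r s t F ∧ F.card = daisyTuran n r s t := by
  have h := Nat.sSup_mem (s := {k | ∃ F : Finset (Finset (Fin n)), (∀ T ∈ F, T.card = r) ∧
      ¬ ContainsDaisy n r s t F ∧ F.card = k})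
    ⟨0, ∅, by simp, not_containsDaisy_empty htr hts, rfl⟩ (daisyTuran_bddAbove n r s t)
  exact h

lemma le_daisyTuran {n r s t : ℕ} {F : Finset (Finset (Fin n))}
    (h1 : ∀ T ∈ F, T.card = r) (h2 : ¬ ContainsDaisy n r s t F) :
    F.card ≤ daisyTuran n r s t :=
  le_csSup (daisyTuran_bddAbove n r s t) ⟨F, h1, h2, rfl⟩

section Link
variable {n r s t : ℕ}

/-- The link of `x` in a family `F` of subsets of `Fin (n+1)`, pulled back to `Fin n`
via `Fin.succAboveEmb x`. -/
noncomputable def linkAt (F : Finset (Finset (Fin (n + 1)))) (x : Fin (n + 1)) :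
    Finset (Finset (Fin n)) :=
  Finset.univ.filter (fun S => insert x (S.map (Fin.succAboveEmb x)) ∈ F)

lemma mem_linkAt {F : Finset (Finset (Fin (n + 1)))} {x : Fin (n + 1)}
    {S : Finset (Fin n)} :
    S ∈ linkAt F x ↔ insert x (S.map (Fin.succAboveEmb x)) ∈ F := by
  simp [linkAt]

lemma notmem_map_succAbove (x : Fin (n + 1)) (S : Finset (Fin n)) :
    x ∉ S.map (Fin.succAboveEmb x) := by
  simp only [Finset.mem_map]
  rintro ⟨i, -, h⟩
  exact Fin.succAbove_ne x i h

lemma linkAt_card_eq (F : Finset (Finset (Fin (n + 1)))) (x : Fin (n + 1)) :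
    (linkAt F x).card = (F.filter (fun T => x ∈ T)).card := by
  apply Finset.card_nbij (fun S => insert x (S.map (Fin.succAboveEmb x)))
  · intro S hS
    simp only [Finset.mem_filter]
    exact Finset.mem_filter.mpr ⟨mem_linkAt.mp hS, Finset.mem_insert_self x _⟩
  · intro S₁ h₁ S₂ h₂ h
    have := congrArg (Finset.erase · x) h
    simp only [Finset.erase_insert (notmem_map_succAbove x _)] at this
    exact Finset.map_injective (Fin.succAboveEmb x) this
  · rintro T hT
    simp only [Finset.coe_filter, Set.mem_setOf_eq] at hT
    obtain ⟨hTF, hxT⟩ := hT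
    refine ⟨Finset.univ.filter (fun i => Fin.succAbove x i ∈ T), ?_, ?_⟩
    · simp only [Finset.mem_coe]
      have hmap : (Finset.univ.filter (fun i => Fin.succAbove x i ∈ T)).map
          (Fin.succAboveEmb x) = T.erase x := by
        ext y
        simp only [Finset.mem_map, Finset.mem_filter, Finset.mem_univ, true_and,
          Finset.mem_erase, Fin.succAboveEmb_apply]
        constructor
        · rintro ⟨i, hi, rfl⟩
          exact ⟨Fin.succAbove_ne x i, hi⟩
        · rintro ⟨hyx, hyT⟩
          obtain ⟨i, rfl⟩ := Fin.exists_succAbove_eq hyx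
          exact ⟨i, hyT, rfl⟩
      rw [mem_linkAt, hmap, Finset.insert_erase hxT]
      exact hTF
    · have hmap : (Finset.univ.filter (fun i => Fin.succAbove x i ∈ T)).map
          (Fin.succAboveEmb x) = T.erase x := by
        ext y
        simp only [Finset.mem_map, Finset.mem_filter, Finset.mem_univ, true_and,
          Finset.mem_erase, Fin.succAboveEmb_apply]
        constructor
        · rintro ⟨i, hi, rfl⟩
          exact ⟨Fin.succAbove_ne x i, hi⟩
        · rintro ⟨hyx, hyT⟩
          obtain ⟨i, rfl⟩ := Fin.exists_succAbove_eq hyx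
          exact ⟨i, hyT, rfl⟩
      show insert x ((Finset.univ.filter (fun i => Fin.succAbove x i ∈ T)).map
        (Fin.succAboveEmb x)) = T
      rw [hmap, Finset.insert_erase hxT]

lemma linkAt_cards {F : Finset (Finset (Fin (n + 1)))}
    (hF : ∀ T ∈ F, T.card = r + 1) (x : Fin (n + 1)) :
    ∀ S ∈ linkAt F x, S.card = r := by
  intro S hS
  have h := hF _ (mem_linkAt.mp hS)
  rw [Finset.card_insert_of_notMem (notmem_map_succAbove x S), Finset.card_map] at h
  omega

lemma linkAt_noDaisy (htr : t ≤ r) (hts : t ≤ s) {F : Finset (Finset (Fin (n + 1)))}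
    (hF : ¬ ContainsDaisy (n + 1) (r + 1) s t F) (x : Fin (n + 1)) :
    ¬ ContainsDaisy n r s t (linkAt F x) := by
  rintro ⟨A, B, hAB, hA, hB, hall⟩
  apply hF
  refine ⟨insert x (A.map (Fin.succAboveEmb x)), insert x (B.map (Fin.succAboveEmb x)),
    Finset.insert_subset_insert x (Finset.map_subset_map.mpr hAB), ?_, ?_, ?_⟩
  · rw [Finset.card_insert_of_notMem (notmem_map_succAbove x A), Finset.card_map]
    omega
  · rw [Finset.card_insert_of_notMem (notmem_map_succAbove x B), Finset.card_map]
    omega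
  · intro T' hAT' hT'B hT'card
    have hxT' : x ∈ T' := hAT' (Finset.mem_insert_self x _)
    set S : Finset (Fin n) := B.filter (fun i => Fin.succAbove x i ∈ T') with hSdef
    have hmap : S.map (Fin.succAboveEmb x) = T'.erase x := by
      ext y
      simp only [hSdef, Finset.mem_map, Finset.mem_filter, Finset.mem_erase,
        Fin.succAboveEmb_apply]
      constructor
      · rintro ⟨i, ⟨hiB, hiT⟩, rfl⟩
        exact ⟨Fin.succAbove_ne x i, hiT⟩
      · rintro ⟨hyx, hyT⟩
        have : y ∈ insert x (B.map (Fin.succAboveEmb x)) := hT'B hyT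
        rw [Finset.mem_insert] at this
        rcases this with h | h
        · exact absurd h hyx
        · obtain ⟨i, hiB, rfl⟩ := Finset.mem_map.mp h
          exact ⟨i, ⟨hiB, hyT⟩, rfl⟩
    have hAS : A ⊆ S := by
      intro a ha
      simp only [hSdef, Finset.mem_filter]
      refine ⟨hAB ha, hAT' ?_⟩
      exact Finset.mem_insert_of_mem (Finset.mem_map_of_mem _ ha)
    have hSB : S ⊆ B := Finset.filter_subset _ _
    have hScard : S.card = r := by
      have h1 : S.card = (T'.erase x).card := by rw [← Finset.card_map, hmap]
      rw [Finset.card_erase_of_mem hxT', hT'card] at h1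
      omega
    have hSmem := mem_linkAt.mp (hall S hAS hSB hScard)
    rwa [hmap, Finset.insert_erase hxT'] at hSmem

end Link

lemma daisyTuran_mono_nat {r s t n : ℕ} (htr : t ≤ r) (hts : t ≤ s) :
    (r + 1) * daisyTuran (n + 1) (r + 1) s t ≤ (n + 1) * daisyTuran n r s t := by
  obtain ⟨F, hFc, hFnd, hFeq⟩ := daisyTuran_spec (n := n + 1) (r := r + 1) (s := s) (t := t)
    (by omega) hts
  have key : (r + 1) * F.card = ∑ x : Fin (n + 1), (linkAt F x).card := by
    have h1 : ∀ T ∈ F, T.card = ∑ x : Fin (n + 1), if x ∈ T then 1 else 0 := by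
      intro T hT
      rw [Finset.sum_ite_mem, Finset.univ_inter, Finset.card_eq_sum_ones]
    calc (r + 1) * F.card = ∑ T ∈ F, T.card := by
          rw [Finset.sum_congr rfl hFc, Finset.sum_const, smul_eq_mul, mul_comm]
      _ = ∑ T ∈ F, ∑ x : Fin (n + 1), if x ∈ T then 1 else 0 := Finset.sum_congr rfl h1
      _ = ∑ x : Fin (n + 1), ∑ T ∈ F, if x ∈ T then 1 else 0 := Finset.sum_comm
      _ = ∑ x : Fin (n + 1), (F.filter (fun T => x ∈ T)).card := by
          refine Finset.sum_congr rfl fun x _ => ?_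
          rw [Finset.card_filter]
      _ = ∑ x : Fin (n + 1), (linkAt F x).card := by
          exact Finset.sum_congr rfl fun x _ => (linkAt_card_eq F x).symm
  have hle : ∀ x : Fin (n + 1), (linkAt F x).card ≤ daisyTuran n r s t := fun x =>
    le_daisyTuran (linkAt_cards hFc x) (linkAt_noDaisy htr hts hFnd x)
  calc (r + 1) * daisyTuran (n + 1) (r + 1) s t = (r + 1) * F.card := by rw [hFeq]
    _ = ∑ x : Fin (n + 1), (linkAt F x).card := key
    _ ≤ ∑ _x : Fin (n + 1), daisyTuran n r s t := Finset.sum_le_sum fun x _ => hle x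
    _ = (n + 1) * daisyTuran n r s t := by
        rw [Finset.sum_const, Finset.card_univ, Fintype.card_fin, smul_eq_mul]


/-- **Lemma (monotonicity in `r`).** For positive integers `r, s, t` with `min{r,s} ≥ t`
and `n ≥ r`, `ex(n+1, D_{r+1}(s,t))/C(n+1,r+1) ≤ ex(n, D_r(s,t))/C(n,r)`; equivalently,
`(r+1)·ex(n+1, D_{r+1}(s,t)) ≤ (n+1)·ex(n, D_r(s,t))`. -/
theorem daisyTuran_density_mono_r (r s t n : ℕ) (ht : 1 ≤ t) (htr : t ≤ r) (hts : t ≤ s)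
    (hn : r ≤ n) :
    (daisyTuran (n + 1) (r + 1) s t : ℝ) / (n + 1).choose (r + 1) ≤
      (daisyTuran n r s t : ℝ) / n.choose r ∧
    (r + 1) * daisyTuran (n + 1) (r + 1) s t ≤ (n + 1) * daisyTuran n r s t := by
  have hmain := daisyTuran_mono_nat (n := n) htr hts
  refine ⟨?_, hmain⟩
  have h1 : 0 < (n.choose r : ℝ) := by exact_mod_cast Nat.choose_pos hn
  have h2 : 0 < ((n + 1).choose (r + 1) : ℝ) := by exact_mod_cast Nat.choose_pos (by omega)
  rw [div_le_div_iff₀ h2 h1]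
  have hid : (n + 1) * n.choose r = (n + 1).choose (r + 1) * (r + 1) :=
    Nat.add_one_mul_choose_eq n r
  have : daisyTuran (n + 1) (r + 1) s t * n.choose r * (r + 1) ≤
      daisyTuran n r s t * (n + 1).choose (r + 1) * (r + 1) := by
    calc daisyTuran (n + 1) (r + 1) s t * n.choose r * (r + 1)
        = ((r + 1) * daisyTuran (n + 1) (r + 1) s t) * n.choose r := by ring
      _ ≤ ((n + 1) * daisyTuran n r s t) * n.choose r := by
          exact Nat.mul_le_mul_right _ hmain
      _ = daisyTuran n r s t * ((n + 1) * n.choose r) := by ring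
      _ = daisyTuran n r s t * (n + 1).choose (r + 1) * (r + 1) := by rw [hid]; ring
  have := Nat.le_of_mul_le_mul_right this (by omega)
  exact_mod_cast this
end

section
/- Let n ∈ ℕ with n ≥ 1 and let w ∈ {0,…,n}. Then there exists a set M of binary vectors in {0,1}^n, each of weight w, such that any two distinct elements of M have Hamming distance at least 4, and |M| ≥ C(n,w)/n. -/
noncomputable def gsSum {n : ℕ} (x : Fin n → Bool) : ZMod n :=
  ∑ i ∈ Finset.univ.filter (fun i => x i = true), ((i : ℕ) : ZMod n)

lemma gs_card_weight (n w : ℕ) :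
    (Finset.univ.filter fun x : Fin n → Bool =>
      (Finset.univ.filter (fun i => x i = true)).card = w).card = n.choose w := by
  classical
  have h := Finset.card_powersetCard w (Finset.univ : Finset (Fin n))
  rw [Finset.card_univ, Fintype.card_fin] at h
  rw [← h]
  refine Finset.card_bij' (fun x _ => Finset.univ.filter (fun i => x i = true))
    (fun S _ => fun i => decide (i ∈ S)) ?_ ?_ ?_ ?_
  · intro x hx
    simp only [Finset.mem_filter, Finset.mem_univ, true_and] at hx
    simp [Finset.mem_powersetCard, hx]
  · intro S hS
    simp only [Finset.mem_powersetCard] at hS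
    simp only [Finset.mem_filter, Finset.mem_univ, true_and]
    rw [show (Finset.univ.filter fun i => decide (i ∈ S) = true) = S by ext i; simp]
    exact hS.2
  · intro x hx
    funext i
    cases h : x i <;> simp [h]
  · intro S hS
    ext i
    simp

lemma gs_dist (n w : ℕ) [NeZero n] (x y : Fin n → Bool)
    (hx : (Finset.univ.filter (fun i => x i = true)).card = w)
    (hy : (Finset.univ.filter (fun i => y i = true)).card = w)
    (hs : gsSum x = gsSum y) (hxy : x ≠ y) : 4 ≤ hammingDist x y := by
  classical
  set S := Finset.univ.filter (fun i => x i = true) with hS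
  set T := Finset.univ.filter (fun i => y i = true) with hT
  have hd : hammingDist x y = (S \ T).card + (T \ S).card := by
    have : (Finset.univ.filter fun i => x i ≠ y i) = (S \ T) ∪ (T \ S) := by
      ext i
      simp only [Finset.mem_filter, Finset.mem_univ, true_and, Finset.mem_union,
        Finset.mem_sdiff, hS, hT]
      cases h1 : x i <;> cases h2 : y i <;> simp
    rw [hammingDist, this, Finset.card_union_of_disjoint]
    exact disjoint_sdiff_sdiff
  have hcards : (S \ T).card = (T \ S).card := by
    have h1 := Finset.card_sdiff_add_card_inter S T
    have h2 := Finset.card_sdiff_add_card_inter T S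
    rw [Finset.inter_comm] at h2
    omega
  by_contra hlt
  push_neg at hlt
  have hne : hammingDist x y ≠ 0 := by
    simp only [ne_eq, hammingDist_eq_zero]
    exact hxy
  have hone : (S \ T).card = 1 := by omega
  have hone' : (T \ S).card = 1 := by omega
  obtain ⟨i, hi⟩ := Finset.card_eq_one.mp hone
  obtain ⟨j, hj⟩ := Finset.card_eq_one.mp hone'
  have hiST : i ∈ S \ T := hi ▸ Finset.mem_singleton_self i
  have hjTS : j ∈ T \ S := hj ▸ Finset.mem_singleton_self j
  have hij : i ≠ j := by
    intro h
    rw [Finset.mem_sdiff] at hiST hjTS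
    exact hjTS.2 (h ▸ hiST.1)
  -- sums
  have hsplitS : gsSum x = ∑ k ∈ S \ T, ((k : ℕ) : ZMod n) + ∑ k ∈ S ∩ T, ((k : ℕ) : ZMod n) := by
    rw [gsSum, ← hS, ← Finset.sum_sdiff (Finset.inter_subset_left),
      Finset.sdiff_inter_self_left]
  have hsplitT : gsSum y = ∑ k ∈ T \ S, ((k : ℕ) : ZMod n) + ∑ k ∈ S ∩ T, ((k : ℕ) : ZMod n) := by
    rw [gsSum, ← hT, ← Finset.sum_sdiff (Finset.inter_subset_left : T ∩ S ⊆ T),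
      Finset.sdiff_inter_self_left, Finset.inter_comm T S]
  rw [hsplitS, hsplitT, hi, hj, Finset.sum_singleton, Finset.sum_singleton,
    add_left_inj] at hs
  have : (i : ℕ) = (j : ℕ) := by
    have h1 := ZMod.val_cast_of_lt (a := (i : ℕ)) (i.isLt)
    have h2 := ZMod.val_cast_of_lt (a := (j : ℕ)) (j.isLt)
    rw [← h1, ← h2, hs]
  exact hij (Fin.ext this)


/-- **Graham–Sloane.** For `n ≥ 1` and `0 ≤ w ≤ n`, there is a set `M ⊆ {0,1}^n` of
vectors of weight `w` with pairwise Hamming distance at least `4` and `|M| ≥ C(n,w)/n`. -/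
theorem exists_constant_weight_code (n w : ℕ) (hn : 1 ≤ n) (hw : w ≤ n) :
    ∃ M : Finset (Fin n → Bool),
      (∀ x ∈ M, (Finset.univ.filter (fun i => x i = true)).card = w) ∧
      (∀ x ∈ M, ∀ y ∈ M, x ≠ y → 4 ≤ hammingDist x y) ∧
      (n.choose w : ℝ) / n ≤ (M.card : ℝ) := by
  classical
  haveI : NeZero n := ⟨by omega⟩
  set W := Finset.univ.filter fun x : Fin n → Bool =>
      (Finset.univ.filter (fun i => x i = true)).card = w with hWdef
  obtain ⟨c, -, hc⟩ := Finset.exists_max_image (Finset.univ : Finset (ZMod n))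
    (fun c => (W.filter (fun x => gsSum x = c)).card) ⟨0, Finset.mem_univ 0⟩
  refine ⟨W.filter (fun x => gsSum x = c), ?_, ?_, ?_⟩
  · intro x hx
    simp only [hWdef, Finset.mem_filter, Finset.mem_univ, true_and] at hx
    exact hx.1
  · intro x hx y hy hxy
    simp only [hWdef, Finset.mem_filter, Finset.mem_univ, true_and] at hx hy
    exact gs_dist n w x y hx.1 hy.1 (hx.2.trans hy.2.symm) hxy
  · rw [div_le_iff₀ (by exact_mod_cast hn)]
    have hsum : W.card = ∑ b : ZMod n, (W.filter (fun x => gsSum x = b)).card :=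
      Finset.card_eq_sum_card_fiberwise (fun x _ => Finset.mem_univ (gsSum x))
    have hle : W.card ≤ n * (W.filter (fun x => gsSum x = c)).card := by
      rw [hsum]
      calc ∑ b : ZMod n, (W.filter (fun x => gsSum x = b)).card
          ≤ ∑ _b : ZMod n, (W.filter (fun x => gsSum x = c)).card :=
            Finset.sum_le_sum (fun b _ => hc b (Finset.mem_univ b))
        _ = n * (W.filter (fun x => gsSum x = c)).card := by
            rw [Finset.sum_const, Finset.card_univ, ZMod.card, smul_eq_mul]
    rw [gs_card_weight n w] at hle
    calc (n.choose w : ℝ) ≤ (n : ℝ) * ((W.filter (fun x => gsSum x = c)).card : ℝ) := by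
          exact_mod_cast hle
      _ = _ := mul_comm _ _
end

section
/- Let n ∈ ℕ with n ≥ 1 and let M ⊆ {0,1}^n be a set such that no two elements of M have Hamming distance exactly 2. Then |M| ≤ 2^n / n. -/
/-- If `M ⊆ {0,1}^n` (with `n ≥ 1`) avoids Hamming distance `2`, then `|M| ≤ 2^n / n`. -/
theorem card_le_of_avoids_hammingDist_two (n : ℕ) (hn : 1 ≤ n) (M : Finset (Fin n → Bool))
    (h : ∀ x ∈ M, ∀ y ∈ M, hammingDist x y ≠ 2) :
    (M.card : ℝ) ≤ 2 ^ n / n := by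
  have key : M.card * n ≤ 2 ^ n := by
    have hinj : Set.InjOn (fun p : (Fin n → Bool) × Fin n =>
        Function.update p.1 p.2 (!p.1 p.2)) ↑(M ×ˢ (Finset.univ : Finset (Fin n)))  := by
      rintro ⟨x, i⟩ hx ⟨y, j⟩ hy heq
      simp only [Finset.coe_product, Set.mem_prod, Finset.mem_coe, Finset.mem_product] at hx hy
      by_cases hij : i = j
      · subst hij
        have hxy : x = y := by
          funext k
          by_cases hk : k = i
          · subst hk
            have := congrFun heq k
            simpa using this
          · have := congrFun heq k
            simpa [Function.update_of_ne hk] using this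
        simp [hxy]
      · exfalso
        have hxi : x i ≠ y i := by
          have := congrFun heq i
          simp [Function.update_of_ne hij] at this
          simp [this]
        have hyj : x j ≠ y j := by
          have := congrFun heq j
          simp [Function.update_of_ne (Ne.symm hij)] at this
          simp [this]
        have hother : ∀ k, k ≠ i → k ≠ j → x k = y k := by
          intro k hki hkj
          have := congrFun heq k
          simpa [Function.update_of_ne hki, Function.update_of_ne hkj] using this
        apply h x hx.1 y hy.1
        have : (Finset.univ.filter fun k => x k ≠ y k) = {i, j} := by
          ext k
          simp only [Finset.mem_filter, Finset.mem_univ, true_and, Finset.mem_insert,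
            Finset.mem_singleton]
          constructor
          · intro hk
            by_contra hc
            push_neg at hc
            exact hk (hother k hc.1 hc.2)
          · rintro (rfl | rfl)
            · exact hxi
            · exact hyj
        calc hammingDist x y = (Finset.univ.filter fun k => x k ≠ y k).card := rfl
          _ = 2 := by rw [this]; rw [Finset.card_insert_of_notMem (by simp [hij])]; simp
    calc M.card * n = (M ×ˢ (Finset.univ : Finset (Fin n))).card := by
          simp [Finset.card_product]
      _ ≤ (Finset.univ : Finset (Fin n → Bool)).card :=
          Finset.card_le_card_of_injOn _ (fun _ _ => Finset.mem_univ _) hinj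
      _ = 2 ^ n := by simp
  have hn' : (0 : ℝ) < n := by exact_mod_cast hn
  rw [le_div_iff₀ hn']
  exact_mod_cast key
end

section
/- Let n ∈ ℕ and let M ⊆ {0,1}^n be a set such that no two elements of M have Hamming distance exactly 2. Then for every y ∈ {0,1}^n with y ∉ M, the number of elements x ∈ M with Hamming distance dist(x,y) = 2 is at most ⌊n/2⌋. -/
open Finset


/-- If `M ⊆ {0,1}^n` avoids Hamming distance `2`, then every `y ∉ M` has at most `⌊n/2⌋`
elements of `M` at Hamming distance exactly `2`. -/
theorem degree_le_of_avoids_hammingDist_two (n : ℕ) (M : Finset (Fin n → Bool))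
    (h : ∀ x ∈ M, ∀ y ∈ M, hammingDist x y ≠ 2)
    (y : Fin n → Bool) (hy : y ∉ M) :
    (M.filter (fun x => hammingDist x y = 2)).card ≤ n / 2 := by
  classical
  set S := M.filter (fun x => hammingDist x y = 2) with hS
  set f : (Fin n → Bool) → Finset (Fin n) := fun x => Finset.univ.filter (fun i => x i ≠ y i)
    with hf
  have hcard : ∀ x ∈ S, (f x).card = 2 := by
    intro x hx
    exact (mem_filter.mp hx).2
  have hdist : ∀ x x' : Fin n → Bool, hammingDist x x' = (symmDiff (f x) (f x')).card := by
    intro x x'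
    unfold hammingDist
    congr 1
    ext i
    simp only [hf, Finset.mem_symmDiff, mem_filter, mem_univ, true_and]
    rcases Bool.eq_or_eq_not (x i) (y i) with h1 | h1 <;>
      rcases Bool.eq_or_eq_not (x' i) (y i) with h2 | h2 <;>
      simp [h1, h2] <;> tauto
  have hinj : ∀ x ∈ S, ∀ x' ∈ S, f x = f x' → x = x' := by
    intro x hx x' hx' hfe
    funext i
    by_cases hi : i ∈ f x
    · have hi' : i ∈ f x' := hfe ▸ hi
      simp only [hf, mem_filter, mem_univ, true_and] at hi hi'
      rcases Bool.eq_or_eq_not (x i) (y i) with h1 | h1 <;>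
        rcases Bool.eq_or_eq_not (x' i) (y i) with h2 | h2 <;> simp_all
    · have hi' : i ∉ f x' := hfe ▸ hi
      simp only [hf, mem_filter, mem_univ, true_and, not_not] at hi hi'
      simp_all
  have hdisj : ∀ x ∈ S, ∀ x' ∈ S, x ≠ x' → Disjoint (f x) (f x') := by
    intro x hx x' hx' hne
    by_contra hd
    have hM : x ∈ M := (mem_filter.mp hx).1
    have hM' : x' ∈ M := (mem_filter.mp hx').1
    have h2 := h x hM x' hM'
    rw [hdist x x'] at h2
    have hne' : f x ≠ f x' := fun e => hne (hinj x hx x' hx' e)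
    rw [Finset.disjoint_iff_inter_eq_empty] at hd
    have hint1 : 1 ≤ ((f x) ∩ (f x')).card :=
      Finset.card_pos.mpr (Finset.nonempty_iff_ne_empty.mpr hd)
    have hcx := hcard x hx
    have hcx' := hcard x' hx'
    have e1 : (f x \ f x').card + (f x ∩ f x').card = (f x).card :=
      Finset.card_sdiff_add_card_inter _ _
    have e2 : (f x' \ f x).card + (f x' ∩ f x).card = (f x').card :=
      Finset.card_sdiff_add_card_inter _ _
    have e3 : (symmDiff (f x) (f x')).card = (f x \ f x').card + (f x' \ f x).card := by
      rw [symmDiff_def, Finset.sup_eq_union, Finset.card_union_of_disjoint disjoint_sdiff_sdiff]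
    have e4 : (f x ∩ f x') = (f x' ∩ f x) := Finset.inter_comm _ _
    rw [e4] at e1 hint1
    have hint2 : (f x' ∩ f x).card ≤ 2 := by
      calc (f x' ∩ f x).card ≤ (f x).card := Finset.card_le_card Finset.inter_subset_right
        _ = 2 := hcx
    rcases (by omega : (f x' ∩ f x).card = 1 ∨ (f x' ∩ f x).card = 2) with hc | hc
    · omega
    · have hA : f x' ∩ f x = f x :=
        Finset.eq_of_subset_of_card_le Finset.inter_subset_right (by omega)
      have hB : f x' ∩ f x = f x' :=
        Finset.eq_of_subset_of_card_le Finset.inter_subset_left (by omega)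
      exact hne' (hA ▸ hB)
  have hbi : (S.biUnion f).card = ∑ x ∈ S, (f x).card := Finset.card_biUnion hdisj
  have hsum : ∑ x ∈ S, (f x).card = 2 * S.card := by
    rw [Finset.sum_congr rfl hcard, Finset.sum_const, smul_eq_mul, mul_comm]
  have hle : (S.biUnion f).card ≤ n := by
    simpa using Finset.card_le_univ (S.biUnion f)
  omega
end

section
/- Let n ∈ ℕ with n ≥ 1 and let x, y ∈ {0,1}^n be distinct vectors of the same weight w. If Σ_{i : x_i = 1} i ≡ Σ_{i : y_i = 1} i (mod n), where the coordinates are indexed by 1,…,n, then the Hamming distance between x and y is at least 4. -/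
/-- If `x ≠ y ∈ {0,1}^n` have the same weight and the sums of the positions (indexed
`1,…,n`) of their non-zero entries are congruent mod `n`, then `dist(x,y) ≥ 4`. -/
theorem hammingDist_ge_four_of_same_weight_same_norm (n : ℕ) (hn : 1 ≤ n)
    (x y : Fin n → Bool) (hxy : x ≠ y) (w : ℕ)
    (hx : (Finset.univ.filter (fun i => x i = true)).card = w)
    (hy : (Finset.univ.filter (fun i => y i = true)).card = w)
    (hmod : (∑ i ∈ Finset.univ.filter (fun i => x i = true), ((i : ℕ) + 1)) % n =
            (∑ i ∈ Finset.univ.filter (fun i => y i = true), ((i : ℕ) + 1)) % n) :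
    4 ≤ hammingDist x y := by
  classical
  set A := Finset.univ.filter (fun i => x i = true) with hA
  set B := Finset.univ.filter (fun i => y i = true) with hB
  have hANB : A ≠ B := by
    intro h
    apply hxy
    funext i
    have hi := Finset.ext_iff.mp h i
    simp only [hA, hB, Finset.mem_filter, Finset.mem_univ, true_and] at hi
    cases hxi : x i <;> cases hyi : y i <;> simp_all
  have hcardAB : A.card = B.card := by rw [hx, hy]
  have hcd : (A \ B).card = (B \ A).card := Finset.card_sdiff_comm hcardAB
  have hunion : Finset.univ.filter (fun i => x i ≠ y i) = (A \ B) ∪ (B \ A) := by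
    ext i
    simp only [hA, hB, Finset.mem_filter, Finset.mem_union, Finset.mem_sdiff,
      Finset.mem_univ, true_and]
    cases hxi : x i <;> cases hyi : y i <;> simp
  have hdist : hammingDist x y = (A \ B).card + (B \ A).card := by
    show (Finset.univ.filter (fun i => x i ≠ y i)).card = _
    rw [hunion, Finset.card_union_of_disjoint disjoint_sdiff_sdiff]
  have hge1 : 1 ≤ (A \ B).card := by
    by_contra h
    push_neg at h
    have h0 : (A \ B).card = 0 := by omega
    have hsub : A ⊆ B := by
      rw [Finset.card_eq_zero, Finset.sdiff_eq_empty_iff_subset] at h0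
      exact h0
    exact hANB (Finset.eq_of_subset_of_card_le hsub hcardAB.ge)
  by_contra hlt
  push_neg at hlt
  have hc1 : (A \ B).card = 1 := by omega
  have hc2 : (B \ A).card = 1 := by omega
  obtain ⟨i, hi⟩ := Finset.card_eq_one.mp hc1
  obtain ⟨j, hj⟩ := Finset.card_eq_one.mp hc2
  have hsA : ∑ k ∈ A, ((k : ℕ) + 1) = (∑ k ∈ A ∩ B, ((k : ℕ) + 1)) + ((i : ℕ) + 1) := by
    rw [← Finset.sum_inter_add_sum_sdiff A B, hi, Finset.sum_singleton]
  have hsB : ∑ k ∈ B, ((k : ℕ) + 1) = (∑ k ∈ A ∩ B, ((k : ℕ) + 1)) + ((j : ℕ) + 1) := by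
    rw [← Finset.sum_inter_add_sum_sdiff B A, hj, Finset.sum_singleton, Finset.inter_comm]
  rw [hsA, hsB] at hmod
  have hcancel : ((i : ℕ) + 1) % n = ((j : ℕ) + 1) % n :=
    Nat.ModEq.add_left_cancel' _ hmod
  have hij : ((i : ℕ) + 1) = ((j : ℕ) + 1) := by
    have hi1 : (i : ℕ) + 1 ≤ n := i.isLt
    have hj1 : (j : ℕ) + 1 ≤ n := j.isLt
    rcases lt_or_eq_of_le hi1 with h1 | h1
    · rw [Nat.mod_eq_of_lt h1] at hcancel
      rcases lt_or_eq_of_le hj1 with h2 | h2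
      · rw [Nat.mod_eq_of_lt h2] at hcancel; omega
      · rw [h2, Nat.mod_self] at hcancel; omega
    · rw [h1, Nat.mod_self] at hcancel
      rcases lt_or_eq_of_le hj1 with h2 | h2
      · rw [Nat.mod_eq_of_lt h2] at hcancel; omega
      · omega
  have hij' : i = j := Fin.ext (by omega)
  have hiA : i ∈ A \ B := by rw [hi]; exact Finset.mem_singleton_self i
  have hjB : j ∈ B \ A := by rw [hj]; exact Finset.mem_singleton_self j
  rw [Finset.mem_sdiff] at hiA hjB
  exact hiA.2 (hij' ▸ hjB.1)
end
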